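/- arXiv:2408.15015 — 11 statements merged into one kernel-verified Lean document; each statement's English description precedes it below -/
import Mathlib

section
/- Let X be a nonempty finite set, p a probability vector on X with positive entries, d : X × X → [0,∞), s_D ≥ 0, s_P ≥ 0, and f : (0,∞) → ℝ convex and differentiable with f(1) = 0; set g(a,b) := f(a/b) − (a/b)·f'(a/b). Let q be a probability vector on X with positive entries. Suppose Q* is a stochastic matrix on X whose output marginal m(y) = Σ_x p(x)Q*(y|x) is positive for every y and which satisfies, with A(x,y) := exp(−s_D·d(x,y) − s_P·g(p(y), m(y))), the identity Q*(y|x) = q(y)A(x,y) / Σ_i q(i)A(x,i) for all x, y. Then Q* minimizes the functional L(Q) := Σ_{x,y} p(x)Q(y|x)·log(Q(y|x)/q(y)) + s_D·Σ_{x,y} p(x)Q(y|x)d(x,y) + s_P·D_f(p||Qm) over all stochastic matrices Q on X with positive output marginal Qm. -/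
namespace RDP

variable {X : Type*}

/-- Output marginal of a channel `Q` under input distribution `p`. -/
noncomputable def marg [Fintype X] (p : X → ℝ) (Q : X → X → ℝ) (y : X) : ℝ :=
  ∑ x, p x * Q x y

/-- Mutual information `I(p,Q) = Σ_{x,y} p(x)Q(y|x) log(Q(y|x)/Qm(y))`
(the convention `0 · log 0 = 0` holds since `Real.log 0 = 0`). -/
noncomputable def mutInfo [Fintype X] (p : X → ℝ) (Q : X → X → ℝ) : ℝ :=
  ∑ x, ∑ y, p x * Q x y * Real.log (Q x y / marg p Q y)

/-- Average distortion `Σ_{x,y} p(x)Q(y|x) d(x,y)`. -/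
noncomputable def distortion [Fintype X] (p : X → ℝ) (d : X → X → ℝ) (Q : X → X → ℝ) : ℝ :=
  ∑ x, ∑ y, p x * Q x y * d x y

/-- f-divergence `D_f(p‖q) = Σ_x q(x) f(p(x)/q(x))`. -/
noncomputable def fDiv [Fintype X] (f : ℝ → ℝ) (p q : X → ℝ) : ℝ :=
  ∑ x, q x * f (p x / q x)

/-- `Q` is a stochastic matrix: nonnegative entries with unit row sums. -/
def IsStochastic [Fintype X] (Q : X → X → ℝ) : Prop :=
  (∀ x y, 0 ≤ Q x y) ∧ ∀ x, ∑ y, Q x y = 1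

/-- The rate-distortion-perception function
`R(D,P) = inf { I(p,Q) : Q stochastic, positive output marginal, distortion ≤ D, D_f ≤ P }`,
with values in `EReal` so that the infimum of the empty set is `⊤`. -/
noncomputable def RDPF [Fintype X] (p : X → ℝ) (d : X → X → ℝ) (f : ℝ → ℝ)
    (D P : ℝ) : EReal :=
  sInf {r : EReal | ∃ Q : X → X → ℝ, IsStochastic Q ∧ (∀ y, 0 < marg p Q y) ∧
    distortion p d Q ≤ D ∧ fDiv f p (marg p Q) ≤ P ∧ r = (mutInfo p Q : EReal)}

/-- The Lagrangian `V(Q) = I(p,Q) + s_D · E[d] + s_P · D_f(p‖Qm)`. -/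
noncomputable def Vfun [Fintype X] (p : X → ℝ) (d : X → X → ℝ) (sD sP : ℝ) (f : ℝ → ℝ)
    (Q : X → X → ℝ) : ℝ :=
  mutInfo p Q + sD * distortion p d Q + sP * fDiv f p (marg p Q)

/-- `μ` is a (complex) eigenvalue of the matrix `M`. -/
def HasEig [Fintype X] (M : Matrix X X ℂ) (μ : ℂ) : Prop :=
  ∃ v : X → ℂ, v ≠ 0 ∧ M.mulVec v = μ • v

lemma tangent_le {f f' : ℝ → ℝ} (hfconv : ConvexOn ℝ (Set.Ioi 0) f)
    (hf' : ∀ x ∈ Set.Ioi (0 : ℝ), HasDerivAt f (f' x) x)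
    {s t : ℝ} (hs : 0 < s) (ht : 0 < t) :
    f s + f' s * (t - s) ≤ f t := by
  rcases lt_trichotomy s t with h | rfl | h
  · have := hfconv.le_slope_of_hasDerivAt hs ht h (hf' s hs)
    rw [slope_def_field] at this
    have h' : 0 < t - s := by linarith
    have := (le_div_iff₀ h').1 this
    linarith
  · simp
  · have := hfconv.slope_le_of_hasDerivAt ht hs h (hf' s hs)
    rw [slope_def_field] at this
    have h' : 0 < s - t := by linarith
    have := (div_le_iff₀ h').1 this
    nlinarith

lemma gibbs_term {a b : ℝ} (ha : 0 ≤ a) (hb : 0 < b) : a - b ≤ a * Real.log (a / b) := by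
  rcases eq_or_lt_of_le ha with rfl | ha'
  · simp; linarith
  · have h1 : 0 < b / a := by positivity
    have := Real.log_le_sub_one_of_pos h1
    have hlog : Real.log (b/a) = - Real.log (a/b) := by
      rw [← Real.log_inv]; congr 1; field_simp
    rw [hlog] at this
    have h2 : a * (-(Real.log (a/b))) ≤ a * (b/a - 1) :=
      mul_le_mul_of_nonneg_left this ha
    have h3 : a * (b/a - 1) = b - a := by field_simp
    nlinarith [h2, h3]

/-- The parametric transition matrix `Q*(y|x) = q(y)A(x,y)/Σ_i q(i)A(x,i)` (with `A` built from
its own output marginal) minimizes the Lagrangian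
`L(Q) = D_KL(pQ‖p⊗q) + s_D·E[d] + s_P·D_f(p‖Qm)` over stochastic matrices with positive
output marginal. -/
theorem fixed_point_minimizes_lagrangian [Fintype X] [Nonempty X]
    (p : X → ℝ) (hp : ∀ x, 0 < p x) (hp1 : ∑ x, p x = 1)
    (d : X → X → ℝ) (hd : ∀ x y, 0 ≤ d x y)
    (sD sP : ℝ) (hsD : 0 ≤ sD) (hsP : 0 ≤ sP)
    (f f' : ℝ → ℝ) (hfconv : ConvexOn ℝ (Set.Ioi 0) f)
    (hf' : ∀ x ∈ Set.Ioi (0 : ℝ), HasDerivAt f (f' x) x) (hf1 : f 1 = 0)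
    (q : X → ℝ) (hq : ∀ y, 0 < q y) (hq1 : ∑ y, q y = 1)
    (Qs : X → X → ℝ) (hQs : IsStochastic Qs)
    (hm : ∀ y, 0 < marg p Qs y)
    (A : X → X → ℝ)
    (hA : ∀ x y, A x y = Real.exp (-(sD * d x y) - sP *
        (f (p y / marg p Qs y) - p y / marg p Qs y * f' (p y / marg p Qs y))))
    (hfix : ∀ x y, Qs x y = q y * A x y / ∑ i, q i * A x i) :
    ∀ Q : X → X → ℝ, IsStochastic Q → (∀ y, 0 < marg p Q y) →
      (∑ x, ∑ y, p x * Qs x y * Real.log (Qs x y / q y))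
          + sD * distortion p d Qs + sP * fDiv f p (marg p Qs)
        ≤ (∑ x, ∑ y, p x * Q x y * Real.log (Q x y / q y))
          + sD * distortion p d Q + sP * fDiv f p (marg p Q) := by
  intro Q hQ hn
  obtain ⟨hQ0, hQ1⟩ := hQ
  obtain ⟨hQs0, hQs1⟩ := hQs
  set g : X → ℝ := fun y =>
    f (p y / marg p Qs y) - p y / marg p Qs y * f' (p y / marg p Qs y) with hg_def
  set Z : X → ℝ := fun x => ∑ i, q i * A x i with hZ_def
  have hgy : ∀ y, g y = f (p y / marg p Qs y)
      - p y / marg p Qs y * f' (p y / marg p Qs y) := fun _ => rfl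
  have hZx : ∀ x, Z x = ∑ i, q i * A x i := fun _ => rfl
  have hApos : ∀ x y, 0 < A x y := fun x y => by rw [hA]; exact Real.exp_pos _
  have hZpos : ∀ x, 0 < Z x := fun x => by
    rw [hZx]
    exact Finset.sum_pos (fun i _ => mul_pos (hq i) (hApos x i)) Finset.univ_nonempty
  have hQspos : ∀ x y, 0 < Qs x y := fun x y => by
    rw [hfix, ← hZx]
    exact div_pos (mul_pos (hq y) (hApos x y)) (hZpos x)
  -- Step 1: linearization of the f-divergence via convexity
  have step1 : fDiv f p (marg p Qs) + ∑ y, (marg p Q y - marg p Qs y) * g y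
      ≤ fDiv f p (marg p Q) := by
    rw [fDiv, fDiv, ← Finset.sum_add_distrib]
    refine Finset.sum_le_sum fun y _ => ?_
    have hmy := hm y
    have hny := hn y
    have hpy := hp y
    have hs : 0 < p y / marg p Qs y := by positivity
    have ht : 0 < p y / marg p Q y := by positivity
    have htan := tangent_le hfconv hf' hs ht
    have h2 := mul_le_mul_of_nonneg_left htan hny.le
    have hms : marg p Qs y * (p y / marg p Qs y) = p y := by field_simp
    have hnt : marg p Q y * (p y / marg p Q y) = p y := by field_simp
    rw [hgy]
    have heq : marg p Qs y * f (p y / marg p Qs y)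
        + (marg p Q y - marg p Qs y) * (f (p y / marg p Qs y)
          - p y / marg p Qs y * f' (p y / marg p Qs y))
        = marg p Q y * (f (p y / marg p Qs y)
          + f' (p y / marg p Qs y) * (p y / marg p Q y - p y / marg p Qs y)) := by
      linear_combination f' (p y / marg p Qs y) * hms - f' (p y / marg p Qs y) * hnt
    rw [heq]
    exact h2
  -- expansion of the linearized Lagrangian
  have expand : ∀ Q' : X → X → ℝ,
      (∑ x, ∑ y, p x * Q' x y * (Real.log (Q' x y / q y) + sD * d x y + sP * g y))
      = (∑ x, ∑ y, p x * Q' x y * Real.log (Q' x y / q y))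
        + sD * distortion p d Q' + sP * ∑ y, marg p Q' y * g y := by
    intro Q'
    have h1 : ∑ y, marg p Q' y * g y = ∑ x, ∑ y, p x * Q' x y * g y := by
      simp only [marg, Finset.sum_mul]
      exact Finset.sum_comm
    rw [h1, distortion, Finset.mul_sum, Finset.mul_sum]
    rw [← Finset.sum_add_distrib, ← Finset.sum_add_distrib]
    refine Finset.sum_congr rfl fun x _ => ?_
    rw [Finset.mul_sum, Finset.mul_sum, ← Finset.sum_add_distrib, ← Finset.sum_add_distrib]
    refine Finset.sum_congr rfl fun y _ => ?_
    ring
  -- per-row identity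
  have row_eq : ∀ x (v : X → ℝ), (∀ y, 0 ≤ v y) → (∑ y, v y = 1) →
      (∑ y, v y * (Real.log (v y / q y) + sD * d x y + sP * g y))
      = (∑ y, v y * Real.log (v y / Qs x y)) - Real.log (Z x) := by
    intro x v hv hv1
    have hterm : ∀ y, v y * (Real.log (v y / q y) + sD * d x y + sP * g y)
        = v y * Real.log (v y / Qs x y) - v y * Real.log (Z x) := by
      intro y
      rcases eq_or_lt_of_le (hv y) with hv0 | hvpos
      · rw [← hv0]; simp
      · have hlogA : Real.log (A x y) = -(sD * d x y) - sP * g y := by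
          rw [hA, Real.log_exp, hgy]
        have hqA : q y * A x y = Qs x y * Z x := by
          rw [hfix, ← hZx, div_mul_cancel₀ _ (hZpos x).ne']
        have hkey : Real.log (v y / q y) + sD * d x y + sP * g y
            = Real.log (v y / Qs x y) - Real.log (Z x) := by
          rw [Real.log_div hvpos.ne' (hq y).ne', Real.log_div hvpos.ne' (hQspos x y).ne']
          have h5 : Real.log (q y) + Real.log (A x y)
              = Real.log (Qs x y) + Real.log (Z x) := by
            rw [← Real.log_mul (hq y).ne' (hApos x y).ne', hqA,
              Real.log_mul (hQspos x y).ne' (hZpos x).ne']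
          rw [hlogA] at h5
          linarith
        rw [hkey]; ring
    rw [Finset.sum_congr rfl fun y _ => hterm y, Finset.sum_sub_distrib,
      ← Finset.sum_mul, hv1, one_mul]
  have rowQs : ∀ x, (∑ y, Qs x y * (Real.log (Qs x y / q y) + sD * d x y + sP * g y))
      = - Real.log (Z x) := by
    intro x
    rw [row_eq x (Qs x) (hQs0 x) (hQs1 x)]
    have : ∀ y, Qs x y * Real.log (Qs x y / Qs x y) = 0 := fun y => by
      rw [div_self (hQspos x y).ne', Real.log_one, mul_zero]
    rw [Finset.sum_congr rfl fun y _ => this y]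
    simp
  have rowQ : ∀ x, - Real.log (Z x)
      ≤ ∑ y, Q x y * (Real.log (Q x y / q y) + sD * d x y + sP * g y) := by
    intro x
    rw [row_eq x (Q x) (hQ0 x) (hQ1 x)]
    have h1 : ∑ y, (Q x y - Qs x y) ≤ ∑ y, Q x y * Real.log (Q x y / Qs x y) :=
      Finset.sum_le_sum fun y _ => gibbs_term (hQ0 x y) (hQspos x y)
    have h2 : ∑ y, (Q x y - Qs x y) = 0 := by
      rw [Finset.sum_sub_distrib, hQ1 x, hQs1 x]; ring
    linarith
  have key : (∑ x, ∑ y, p x * Qs x y * (Real.log (Qs x y / q y) + sD * d x y + sP * g y))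
      ≤ ∑ x, ∑ y, p x * Q x y * (Real.log (Q x y / q y) + sD * d x y + sP * g y) := by
    refine Finset.sum_le_sum fun x _ => ?_
    simp only [mul_assoc, ← Finset.mul_sum]
    refine mul_le_mul_of_nonneg_left ?_ (hp x).le
    rw [rowQs x]
    exact rowQ x
  have eQs := expand Qs
  have eQ := expand Q
  rw [eQs, eQ] at key
  have hsplit : ∑ y, (marg p Q y - marg p Qs y) * g y
      = ∑ y, marg p Q y * g y - ∑ y, marg p Qs y * g y := by
    simp only [sub_mul]
    exact Finset.sum_sub_distrib (fun y => marg p Q y * g y) (fun y => marg p Qs y * g y)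
  rw [hsplit] at step1
  have step1' := mul_le_mul_of_nonneg_left step1 hsP
  linarith


end RDP
end

section
/- Let X be a nonempty finite set, p a probability vector on X with positive entries, d : X × X → [0,∞), s_D ≥ 0, s_P ≥ 0, and f : (0,∞) → ℝ convex and differentiable with f(1) = 0; set g(a,b) := f(a/b) − (a/b)·f'(a/b). Let (q^{(n)})_{n≥0} be a sequence of probability vectors on X with all entries positive satisfying, for every n and every y, q^{(n+1)}(y) = q^{(n)}(y)·Σ_x p(x)A_n(x,y)/(Σ_i q^{(n)}(i)A_n(x,i)), where A_n(x,y) := exp(−s_D·d(x,y) − s_P·g(p(y), q^{(n+1)}(y))); set Q^{(n+1)}(y|x) := q^{(n)}(y)A_n(x,y)/(Σ_i q^{(n)}(i)A_n(x,i)), whose output marginal is q^{(n+1)}. Assume there exists a probability vector q* on X with positive entries such that, with A*(x,y) := exp(−s_D·d(x,y) − s_P·g(p(y), q*(y))), one has Σ_x p(x)A*(x,y)/(Σ_i q*(i)A*(x,i)) = 1 for every y; set Q*(y|x) := q*(y)A*(x,y)/Σ_i q*(i)A*(x,i). Define V(Q) := I(p,Q) + s_D·Σ_{x,y} p(x)Q(y|x)d(x,y)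 + s_P·D_f(p||Qm). Then lim_{n→∞} V(Q^{(n)}) = V(Q*), and V(Q*) equals the infimum of V over all stochastic matrices on X with positive output marginal. -/
namespace RDP

variable {X : Type*}

noncomputable def KL [Fintype X] (u v : X → ℝ) : ℝ := ∑ y, u y * Real.log (u y / v y)

/-- log t ≥ 1 - 1/t -/
lemma one_sub_inv_le_log {t : ℝ} (ht : 0 < t) : 1 - t⁻¹ ≤ Real.log t := by
  have h := Real.log_le_sub_one_of_pos (inv_pos.mpr ht)
  rw [Real.log_inv] at h
  linarith

/-- Log-sum inequality. -/
lemma logsum [Fintype X] [Nonempty X] (a b : X → ℝ) (ha : ∀ i, 0 ≤ a i) (hb : ∀ i, 0 < b i)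
    (hA : 0 < ∑ i, a i) :
    (∑ i, a i) * Real.log ((∑ i, a i) / (∑ i, b i)) ≤ ∑ i, a i * Real.log (a i / b i) := by
  set A := ∑ i, a i with hAdef
  set B := ∑ i, b i with hBdef
  have hB : 0 < B := Finset.sum_pos (fun i _ => hb i) Finset.univ_nonempty
  have key : ∀ i, a i * Real.log (A / B) + a i - b i * A / B ≤ a i * Real.log (a i / b i) := by
    intro i
    rcases eq_or_lt_of_le (ha i) with h0 | h0
    · rw [← h0]
      have : 0 ≤ b i * A / B := div_nonneg (mul_nonneg (hb i).le hA.le) hB.le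
      simp only [zero_mul, zero_add, zero_sub, neg_nonpos]
      linarith
    · have h1 : 0 < (a i * B) / (b i * A) := div_pos (mul_pos h0 hB) (mul_pos (hb i) hA)
      have h2 := one_sub_inv_le_log h1
      have h3 : ((a i * B) / (b i * A))⁻¹ = (b i * A) / (a i * B) := by
        rw [inv_div]
      rw [h3] at h2
      have h4 : Real.log ((a i * B) / (b i * A)) =
          Real.log (a i / b i) - Real.log (A / B) := by
        rw [Real.log_div (mul_pos h0 hB).ne' (mul_pos (hb i) hA).ne',
            Real.log_div h0.ne' (hb i).ne', Real.log_div hA.ne' hB.ne',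
            Real.log_mul h0.ne' hB.ne', Real.log_mul (hb i).ne' hA.ne']
        ring
      rw [h4] at h2
      have h5 := mul_le_mul_of_nonneg_left h2 (ha i)
      have h6 : a i * ((b i * A) / (a i * B)) = b i * A / B := by
        field_simp
      nlinarith [h5, h6]
  have hsum : ∑ i, (a i * Real.log (A / B) + a i - b i * A / B)
      ≤ ∑ i, a i * Real.log (a i / b i) := Finset.sum_le_sum (fun i _ => key i)
  have hls : ∑ i, (a i * Real.log (A / B) + a i - b i * A / B)
      = A * Real.log (A / B) + A - A := by
    rw [Finset.sum_sub_distrib, Finset.sum_add_distrib, ← Finset.sum_mul]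
    have : ∑ i, b i * A / B = A := by
      rw [← Finset.sum_div, ← Finset.sum_mul, ← hBdef]
      field_simp
    rw [this, ← hAdef]
  rw [hls] at hsum
  linarith

lemma kl_nonneg [Fintype X] [Nonempty X] (u v : X → ℝ) (hu : ∀ i, 0 < u i) (hv : ∀ i, 0 < v i)
    (hu1 : ∑ i, u i = 1) (hv1 : ∑ i, v i = 1) : 0 ≤ KL u v := by
  have := logsum u v (fun i => (hu i).le) hv (by rw [hu1]; norm_num)
  rw [hu1, hv1] at this
  simpa [KL] using this

lemma kl_self [Fintype X] (u : X → ℝ) (hu : ∀ i, 0 < u i) : KL u u = 0 := by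
  unfold KL
  apply Finset.sum_eq_zero
  intro i _
  rw [div_self (hu i).ne', Real.log_one, mul_zero]

/-- Gradient inequality for convex differentiable functions. -/
lemma gradineq {f f' : ℝ → ℝ} (hfconv : ConvexOn ℝ (Set.Ioi 0) f)
    (hf' : ∀ x ∈ Set.Ioi (0 : ℝ), HasDerivAt f (f' x) x)
    {u v : ℝ} (hu : 0 < u) (hv : 0 < v) : f v + f' v * (u - v) ≤ f u := by
  rcases lt_trichotomy u v with h | h | h
  · have hs := hfconv.slope_le_of_hasDerivAt (Set.mem_Ioi.mpr hu) (Set.mem_Ioi.mpr hv) h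
      (hf' v (Set.mem_Ioi.mpr hv))
    rw [slope_def_field] at hs
    have hvu : 0 < v - u := by linarith
    rw [div_le_iff₀ hvu] at hs
    nlinarith
  · subst h; simp
  · have hs := hfconv.le_slope_of_hasDerivAt (Set.mem_Ioi.mpr hv) (Set.mem_Ioi.mpr hu) h
      (hf' v (Set.mem_Ioi.mpr hv))
    rw [slope_def_field] at hs
    have huv : 0 < u - v := by linarith
    rw [le_div_iff₀ huv] at hs
    nlinarith


/-- The four-point inequality for the OAM iteration. -/
lemma master [Fintype X] [Nonempty X] (p q qp : X → ℝ) (hp : ∀ x, 0 < p x)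
    (hq : ∀ x, 0 < q x) (hqp : ∀ x, 0 < qp x)
    (d : X → X → ℝ) (sD sP : ℝ) (hsP : 0 ≤ sP)
    (f f' : ℝ → ℝ)
    (hgrad : ∀ u v : ℝ, 0 < u → 0 < v → f v + f' v * (u - v) ≤ f u)
    (A : X → X → ℝ)
    (hA : ∀ x y, A x y = Real.exp (-(sD * d x y) - sP *
        (f (p y / qp y) - p y / qp y * f' (p y / qp y))))
    (Qp : X → X → ℝ) (hQp : ∀ x y, Qp x y = q y * A x y / ∑ i, q i * A x i)
    (hmarg : ∀ y, marg p Qp y = qp y)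
    (Q' : X → X → ℝ) (hQs : IsStochastic Q') (hq' : ∀ y, 0 < marg p Q' y) :
    Vfun p d sD sP f Qp + KL qp q + KL (marg p Q') qp
      ≤ Vfun p d sD sP f Q' + KL (marg p Q') q := by
  classical
  set g : X → ℝ := fun y => f (p y / qp y) - p y / qp y * f' (p y / qp y) with hg
  set Z : X → ℝ := fun x => ∑ i, q i * A x i with hZdef
  have hApos : ∀ x y, 0 < A x y := fun x y => by rw [hA]; exact Real.exp_pos _
  have hZpos : ∀ x, 0 < Z x :=
    fun x => Finset.sum_pos (fun i _ => mul_pos (hq i) (hApos x i)) Finset.univ_nonempty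
  have hQpdef : ∀ x y, Qp x y = q y * A x y / Z x := hQp
  have hQppos : ∀ x y, 0 < Qp x y := fun x y => by
    rw [hQpdef]; exact div_pos (mul_pos (hq y) (hApos x y)) (hZpos x)
  have hrow : ∀ x, ∑ y, Qp x y = 1 := by
    intro x
    rw [Finset.sum_congr rfl (fun y _ => hQpdef x y), ← Finset.sum_div,
      div_eq_one_iff_eq (hZpos x).ne']
  have hlogA : ∀ x y, Real.log (A x y) = -(sD * d x y) - sP * g y := fun x y => by
    rw [hA]; exact Real.log_exp _
  have hmQp : marg p Qp = qp := funext hmarg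
  have hm2 : ∀ y, (∑ x, p x * Qp x y) = qp y := hmarg
  have hm2' : ∀ y, (∑ x, p x * Q' x y) = marg p Q' y := fun y => rfl
  -- helpers
  have H1 : ∀ c : X → ℝ, ∑ x, ∑ y, p x * Qp x y * c y = ∑ y, qp y * c y := by
    intro c
    rw [Finset.sum_comm]
    refine Finset.sum_congr rfl fun y _ => ?_
    rw [← Finset.sum_mul, hm2 y]
  have H2 : ∀ c : X → ℝ, ∑ x, ∑ y, p x * Q' x y * c y = ∑ y, marg p Q' y * c y := by
    intro c
    rw [Finset.sum_comm]
    refine Finset.sum_congr rfl fun y _ => ?_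
    rw [← Finset.sum_mul, hm2' y]
  have H3 : ∀ c : X → ℝ, ∑ x, ∑ y, p x * Qp x y * c x = ∑ x, p x * c x := by
    intro c
    refine Finset.sum_congr rfl fun x _ => ?_
    rw [Finset.sum_congr rfl (fun y _ => show p x * Qp x y * c x = p x * c x * Qp x y by ring),
      ← Finset.mul_sum, hrow x, mul_one]
  have H4 : ∀ c : X → ℝ, ∑ x, ∑ y, p x * Q' x y * c x = ∑ x, p x * c x := by
    intro c
    refine Finset.sum_congr rfl fun x _ => ?_
    rw [Finset.sum_congr rfl (fun y _ => show p x * Q' x y * c x = p x * c x * Q' x y by ring),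
      ← Finset.mul_sum, hQs.2 x, mul_one]
  -- Identity I1
  have I1 : mutInfo p Qp + sD * distortion p d Qp + sP * fDiv f p qp + KL qp q
      = sP * (∑ y, p y * f' (p y / qp y)) - ∑ x, p x * Real.log (Z x) := by
    have e1 : mutInfo p Qp = (∑ y, qp y * (Real.log (q y / qp y) - sP * g y))
        - sD * distortion p d Qp - ∑ x, p x * Real.log (Z x) := by
      simp only [mutInfo]
      have step1 : ∀ x y, p x * Qp x y * Real.log (Qp x y / marg p Qp y)
          = p x * Qp x y * (Real.log (q y / qp y) - sP * g y)
            - sD * (p x * Qp x y * d x y) - p x * Qp x y * Real.log (Z x) := by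
        intro x y
        rw [hmarg y]
        have hlog : Real.log (Qp x y / qp y)
            = Real.log (q y / qp y) + (-(sD * d x y) - sP * g y) - Real.log (Z x) := by
          rw [hQpdef x y,
            Real.log_div (div_pos (mul_pos (hq y) (hApos x y)) (hZpos x)).ne' (hqp y).ne',
            Real.log_div (mul_pos (hq y) (hApos x y)).ne' (hZpos x).ne',
            Real.log_mul (hq y).ne' (hApos x y).ne', hlogA x y,
            Real.log_div (hq y).ne' (hqp y).ne']
          ring
        rw [hlog]; ring
      rw [Finset.sum_congr rfl fun x _ => Finset.sum_congr rfl fun y _ => step1 x y]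
      simp only [Finset.sum_sub_distrib]
      rw [H1 (fun y => Real.log (q y / qp y) - sP * g y), H3 (fun x => Real.log (Z x))]
      have hd : ∑ x, ∑ y, sD * (p x * Qp x y * d x y) = sD * distortion p d Qp := by
        simp only [distortion, Finset.mul_sum]
      rw [hd]
    rw [e1]
    simp only [fDiv, KL]
    have e2 : (∑ y, qp y * (Real.log (q y / qp y) - sP * g y))
        + sP * (∑ y, qp y * f (p y / qp y)) + (∑ y, qp y * Real.log (qp y / q y))
        = sP * (∑ y, p y * f' (p y / qp y)) := by
      simp only [Finset.mul_sum]
      rw [← Finset.sum_add_distrib, ← Finset.sum_add_distrib]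
      apply Finset.sum_congr rfl
      intro y _
      have hlq : Real.log (q y / qp y) = - Real.log (qp y / q y) := by
        rw [Real.log_div (hq y).ne' (hqp y).ne', Real.log_div (hqp y).ne' (hq y).ne']; ring
      have hpq : qp y * (p y / qp y) = p y := by
        rw [mul_comm, div_mul_cancel₀ _ (hqp y).ne']
      simp only [hg]
      rw [hlq]
      linear_combination (sP * f' (p y / qp y)) * hpq
    linarith [e2]
  -- the gradient inequality, summed
  have hstar : ∀ y, p y * f' (p y / qp y) + marg p Q' y * g y
      ≤ marg p Q' y * f (p y / marg p Q' y) := by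
    intro y
    have h := hgrad (p y / marg p Q' y) (p y / qp y)
      (div_pos (hp y) (hq' y)) (div_pos (hp y) (hqp y))
    have h2 := mul_le_mul_of_nonneg_left h (hq' y).le
    have key : marg p Q' y * (f (p y / qp y)
          + f' (p y / qp y) * (p y / marg p Q' y - p y / qp y))
        = p y * f' (p y / qp y)
          + marg p Q' y * (f (p y / qp y) - p y / qp y * f' (p y / qp y)) := by
      have hmp : marg p Q' y * (p y / marg p Q' y) = p y := by
        rw [mul_comm, div_mul_cancel₀ _ (hq' y).ne']
      linear_combination f' (p y / qp y) * hmp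
    rw [key] at h2
    simpa only [hg] using h2
  have haa : sP * (∑ y, (p y * f' (p y / qp y) + marg p Q' y * g y))
      ≤ sP * fDiv f p (marg p Q') := by
    apply mul_le_mul_of_nonneg_left _ hsP
    simp only [fDiv]
    exact Finset.sum_le_sum fun y _ => hstar y
  have haa' : sP * (∑ y, p y * f' (p y / qp y)) + sP * (∑ y, marg p Q' y * g y)
      ≤ sP * fDiv f p (marg p Q') := by
    rw [Finset.sum_add_distrib, mul_add] at haa
    exact haa
  -- Identity hb
  have hb : mutInfo p Q' + sD * distortion p d Q' + sP * (∑ y, marg p Q' y * g y)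
        + KL (marg p Q') q
      = (∑ x, ∑ y, p x * Q' x y * Real.log (Q' x y / Qp x y))
        - ∑ x, p x * Real.log (Z x) := by
    simp only [mutInfo, KL]
    rw [← H2 g, ← H2 (fun y => Real.log (marg p Q' y / q y)), ← H4 (fun x => Real.log (Z x))]
    have hd : sD * distortion p d Q' = ∑ x, ∑ y, sD * (p x * Q' x y * d x y) := by
      simp only [distortion, Finset.mul_sum]
    rw [hd]
    have hg' : sP * (∑ x, ∑ y, p x * Q' x y * g y)
        = ∑ x, ∑ y, sP * (p x * Q' x y * g y) := by
      simp only [Finset.mul_sum]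
    rw [hg']
    simp only [← Finset.sum_add_distrib, ← Finset.sum_sub_distrib]
    refine Finset.sum_congr rfl fun x _ => Finset.sum_congr rfl fun y _ => ?_
    rcases eq_or_lt_of_le (hQs.1 x y) with h0 | h0
    · rw [← h0]; simp
    · rw [Real.log_div h0.ne' (hq' y).ne', Real.log_div (hq' y).ne' (hq y).ne',
        Real.log_div h0.ne' (hQppos x y).ne', hQpdef x y,
        Real.log_div (mul_pos (hq y) (hApos x y)).ne' (hZpos x).ne',
        Real.log_mul (hq y).ne' (hApos x y).ne', hlogA x y]
      ring
  -- I3 : marginal KL ≤ row KL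
  have I3 : KL (marg p Q') qp ≤ ∑ x, ∑ y, p x * Q' x y * Real.log (Q' x y / Qp x y) := by
    rw [Finset.sum_comm]
    simp only [KL]
    apply Finset.sum_le_sum
    intro y _
    have hper : ∀ x, p x * Q' x y * Real.log (Q' x y / Qp x y)
        = p x * Q' x y * Real.log ((p x * Q' x y) / (p x * Qp x y)) := by
      intro x
      rcases eq_or_lt_of_le (hQs.1 x y) with h0 | h0
      · rw [← h0]; simp
      · rw [mul_div_mul_left _ _ (hp x).ne']
    rw [Finset.sum_congr rfl fun x _ => hper x]
    have hls := logsum (fun x => p x * Q' x y) (fun x => p x * Qp x y)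
      (fun x => mul_nonneg (hp x).le (hQs.1 x y)) (fun x => mul_pos (hp x) (hQppos x y))
      (by rw [hm2' y]; exact hq' y)
    rw [hm2' y, hm2 y] at hls
    exact hls
  -- combine
  simp only [Vfun, hmQp]
  linarith [I1, hb, haa', I3]

/-- Convergence of the Optimal Alternating Minimization iteration: the Lagrangian values
`V(Q^{(n)})` converge to `V(Q*)`, which is the infimum of `V` over stochastic matrices
with positive output marginal. -/
theorem OAM_convergence [Fintype X] [Nonempty X]
    (p : X → ℝ) (hp : ∀ x, 0 < p x) (hp1 : ∑ x, p x = 1)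
    (d : X → X → ℝ) (hd : ∀ x y, 0 ≤ d x y)
    (sD sP : ℝ) (hsD : 0 ≤ sD) (hsP : 0 ≤ sP)
    (f f' : ℝ → ℝ) (hfconv : ConvexOn ℝ (Set.Ioi 0) f)
    (hf' : ∀ x ∈ Set.Ioi (0 : ℝ), HasDerivAt f (f' x) x) (hf1 : f 1 = 0)
    (qseq : ℕ → X → ℝ) (hqpos : ∀ n y, 0 < qseq n y) (hqsum : ∀ n, ∑ y, qseq n y = 1)
    (A : ℕ → X → X → ℝ)
    (hA : ∀ n x y, A n x y = Real.exp (-(sD * d x y) - sP *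
        (f (p y / qseq (n + 1) y) - p y / qseq (n + 1) y * f' (p y / qseq (n + 1) y))))
    (hiter : ∀ n y, qseq (n + 1) y =
        qseq n y * ∑ x, p x * A n x y / (∑ i, qseq n i * A n x i))
    (Qit : ℕ → X → X → ℝ)
    (hQit : ∀ n x y, Qit (n + 1) x y = qseq n y * A n x y / ∑ i, qseq n i * A n x i)
    (qstar : X → ℝ) (hqs : ∀ y, 0 < qstar y) (hqs1 : ∑ y, qstar y = 1)
    (As : X → X → ℝ)
    (hAs : ∀ x y, As x y = Real.exp (-(sD * d x y) - sP *
        (f (p y / qstar y) - p y / qstar y * f' (p y / qstar y))))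
    (hfix : ∀ y, ∑ x, p x * As x y / (∑ i, qstar i * As x i) = 1)
    (Qstar : X → X → ℝ)
    (hQstar : ∀ x y, Qstar x y = qstar y * As x y / ∑ i, qstar i * As x i)
    :
    Filter.Tendsto (fun n => Vfun p d sD sP f (Qit n)) Filter.atTop
        (nhds (Vfun p d sD sP f Qstar))
    ∧ Vfun p d sD sP f Qstar =
        sInf {v : ℝ | ∃ Q : X → X → ℝ, IsStochastic Q ∧ (∀ y, 0 < marg p Q y) ∧
          v = Vfun p d sD sP f Q} := by
  classical
  have hgr : ∀ u v : ℝ, 0 < u → 0 < v → f v + f' v * (u - v) ≤ f u :=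
    fun u v hu hv => gradineq hfconv hf' hu hv
  -- positivity facts
  have hApos : ∀ n x y, 0 < A n x y := fun n x y => by rw [hA]; exact Real.exp_pos _
  have hZpos : ∀ n x, 0 < ∑ i, qseq n i * A n x i := fun n x =>
    Finset.sum_pos (fun i _ => mul_pos (hqpos n i) (hApos n x i)) Finset.univ_nonempty
  have hAspos : ∀ x y, 0 < As x y := fun x y => by rw [hAs]; exact Real.exp_pos _
  have hZspos : ∀ x, 0 < ∑ i, qstar i * As x i := fun x =>
    Finset.sum_pos (fun i _ => mul_pos (hqs i) (hAspos x i)) Finset.univ_nonempty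
  have hQitpos : ∀ n x y, 0 < Qit (n + 1) x y := fun n x y => by
    rw [hQit]; exact div_pos (mul_pos (hqpos n y) (hApos n x y)) (hZpos n x)
  have hQstarpos : ∀ x y, 0 < Qstar x y := fun x y => by
    rw [hQstar]; exact div_pos (mul_pos (hqs y) (hAspos x y)) (hZspos x)
  have hstochit : ∀ n, IsStochastic (Qit (n + 1)) := by
    intro n
    refine ⟨fun x y => (hQitpos n x y).le, fun x => ?_⟩
    rw [Finset.sum_congr rfl fun y _ => hQit n x y, ← Finset.sum_div,
      div_eq_one_iff_eq (hZpos n x).ne']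
  have hstochstar : IsStochastic Qstar := by
    refine ⟨fun x y => (hQstarpos x y).le, fun x => ?_⟩
    rw [Finset.sum_congr rfl fun y _ => hQstar x y, ← Finset.sum_div,
      div_eq_one_iff_eq (hZspos x).ne']
  have hmargit : ∀ n y, marg p (Qit (n + 1)) y = qseq (n + 1) y := by
    intro n y
    show ∑ x, p x * Qit (n + 1) x y = qseq (n + 1) y
    rw [hiter n y, Finset.mul_sum]
    exact Finset.sum_congr rfl fun x _ => by rw [hQit n x y]; ring
  have hmargstar : ∀ y, marg p Qstar y = qstar y := by
    intro y
    show ∑ x, p x * Qstar x y = qstar y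
    have h1 : ∑ x, p x * Qstar x y
        = qstar y * ∑ x, p x * As x y / (∑ i, qstar i * As x i) := by
      rw [Finset.mul_sum]
      exact Finset.sum_congr rfl fun x _ => by rw [hQstar x y]; ring
    rw [h1, hfix y, mul_one]
  -- optimality of Qstar
  have hopt : ∀ Q' : X → X → ℝ, IsStochastic Q' → (∀ y, 0 < marg p Q' y) →
      Vfun p d sD sP f Qstar ≤ Vfun p d sD sP f Q' := by
    intro Q' h1 h2
    have hm := master p qstar qstar hp hqs hqs d sD sP hsP f f' hgr As hAs Qstar hQstar
      hmargstar Q' h1 h2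
    rw [kl_self qstar hqs] at hm
    linarith [hm]
  -- the telescoping step
  have hstep : ∀ n, Vfun p d sD sP f (Qit (n + 1)) + KL (qseq (n + 1)) (qseq n)
      + KL qstar (qseq (n + 1)) ≤ Vfun p d sD sP f Qstar + KL qstar (qseq n) := by
    intro n
    have hm := master p (qseq n) (qseq (n + 1)) hp (hqpos n) (hqpos (n + 1)) d sD sP hsP
      f f' hgr (A n) (hA n) (Qit (n + 1)) (hQit n) (hmargit n) Qstar hstochstar
      (fun y => by rw [hmargstar y]; exact hqs y)
    rwa [show marg p Qstar = qstar from funext hmargstar] at hm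
  -- convergence
  set Vst := Vfun p d sD sP f Qstar with hVst
  set Φ : ℕ → ℝ := fun n => KL qstar (qseq n) with hPhi
  have hmargitpos : ∀ n y, 0 < marg p (Qit (n + 1)) y := fun n y => by
    rw [hmargit n y]; exact hqpos (n + 1) y
  have hgapnn : ∀ n, 0 ≤ Vfun p d sD sP f (Qit (n + 1)) - Vst := fun n =>
    sub_nonneg.mpr (hopt (Qit (n + 1)) (hstochit n) (hmargitpos n))
  have hklnn : ∀ n, 0 ≤ KL (qseq (n + 1)) (qseq n) := fun n =>
    kl_nonneg _ _ (hqpos (n + 1)) (hqpos n) (hqsum (n + 1)) (hqsum n)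
  have hgaple : ∀ n, Vfun p d sD sP f (Qit (n + 1)) - Vst ≤ Φ n - Φ (n + 1) := by
    intro n
    have h1 := hstep n
    have h2 := hklnn n
    simp only [hPhi]
    linarith
  have hPhinn : ∀ n, 0 ≤ Φ n := fun n =>
    kl_nonneg _ _ hqs (hqpos n) hqs1 (hqsum n)
  have hanti : Antitone Φ := antitone_nat_of_succ_le fun n => by
    have h1 := hgaple n; have h2 := hgapnn n; linarith
  have hbdd : BddBelow (Set.range Φ) := by
    refine ⟨0, ?_⟩
    rintro v ⟨n, rfl⟩
    exact hPhinn n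
  have hconv : Filter.Tendsto Φ Filter.atTop (nhds (⨅ n, Φ n)) :=
    tendsto_atTop_ciInf hanti hbdd
  have hconv1 : Filter.Tendsto (fun n => Φ (n + 1)) Filter.atTop (nhds (⨅ n, Φ n)) :=
    hconv.comp (Filter.tendsto_add_atTop_nat 1)
  have hdiff : Filter.Tendsto (fun n => Φ n - Φ (n + 1)) Filter.atTop (nhds 0) := by
    have := hconv.sub hconv1
    simpa using this
  have hgap0 : Filter.Tendsto (fun n => Vfun p d sD sP f (Qit (n + 1)) - Vst)
      Filter.atTop (nhds 0) := squeeze_zero hgapnn hgaple hdiff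
  have hshift : Filter.Tendsto (fun n => Vfun p d sD sP f (Qit (n + 1)))
      Filter.atTop (nhds Vst) := by
    have := hgap0.add (tendsto_const_nhds (x := Vst))
    simpa using this
  have hlim : Filter.Tendsto (fun n => Vfun p d sD sP f (Qit n))
      Filter.atTop (nhds Vst) := by
    have := (Filter.tendsto_add_atTop_iff_nat
      (f := fun n => Vfun p d sD sP f (Qit n)) (l := nhds Vst) 1).mp
    exact this hshift
  refine ⟨hlim, ?_⟩
  -- infimum characterization
  have hmem : Vst ∈ {v : ℝ | ∃ Q : X → X → ℝ, IsStochastic Q ∧ (∀ y, 0 < marg p Q y) ∧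
      v = Vfun p d sD sP f Q} :=
    ⟨Qstar, hstochstar, fun y => by rw [hmargstar y]; exact hqs y, rfl⟩
  have hlb : ∀ v ∈ {v : ℝ | ∃ Q : X → X → ℝ, IsStochastic Q ∧ (∀ y, 0 < marg p Q y) ∧
      v = Vfun p d sD sP f Q}, Vst ≤ v := by
    rintro v ⟨Q, h1, h2, rfl⟩
    exact hopt Q h1 h2
  exact le_antisymm (le_csInf ⟨Vst, hmem⟩ hlb) (csInf_le ⟨Vst, hlb⟩ hmem)

end RDP
end

section
/- In the setting of the Optimal Alternating Minimization iteration: let (q^{(n)})_{n≥0} be probability vectors on X with positive entries satisfying q^{(n+1)}(y) = q^{(n)}(y)·Σ_x p(x)A_n(x,y)/(Σ_i q^{(n)}(i)A_n(x,i)) with A_n(x,y) := exp(−s_D·d(x,y) − s_P·g(p(y), q^{(n+1)}(y))), and set Q^{(n+1)}(y|x) := q^{(n)}(y)A_n(x,y)/(Σ_i q^{(n)}(i)A_n(x,i)). Assume q* is a probability vector with positive entries such that, with A*(x,y) := exp(−s_D·d(x,y) − s_P·g(p(y), q*(y))), Σ_x p(x)A*(x,y)/(Σ_i q*(i)A*(x,i))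 = 1 for every y, and set Q*(y|x) := q*(y)A*(x,y)/Σ_i q*(i)A*(x,i) and V(Q) := I(p,Q) + s_D·Σ_{x,y} p(x)Q(y|x)d(x,y) + s_P·D_f(p||Qm). Define W_n := s_P·Σ_y p(y)·f'(p(y)/q^{(n+1)}(y)) − Σ_x p(x)·log(Σ_y q^{(n)}(y)A_n(x,y)). Then for every n ≥ 1: 0 ≤ W_n − V(Q*) ≤ Σ_{x,y} p(x)Q*(y|x)·log(Q^{(n+1)}(y|x)/Q^{(n)}(y|x)). -/
namespace RDP

variable {X : Type*}

private lemma weighted_log_le [Fintype X] (u a : X → ℝ) (c S : ℝ)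
    (hu : ∀ x, 0 ≤ u x) (ha : ∀ x, 0 < a x) (hc : 0 < c) (hS : 0 < S)
    (hu1 : ∑ x, u x = c) (hS1 : ∑ x, u x * a x = S) :
    ∑ x, u x * Real.log (a x) ≤ c * Real.log (S / c) := by
  have key : ∀ x, u x * Real.log (a x) - u x * Real.log (S / c) ≤ u x * a x * (c / S) - u x := by
    intro x
    rcases eq_or_lt_of_le (hu x) with h | h
    · simp [← h]
    · have ht : (0:ℝ) < a x * c / S := div_pos (mul_pos (ha x) hc) hS
      have h1 : Real.log (a x * c / S) ≤ a x * c / S - 1 := Real.log_le_sub_one_of_pos ht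
      have h2 : Real.log (a x * c / S) = Real.log (a x) - Real.log (S / c) := by
        rw [Real.log_div (mul_pos (ha x) hc).ne' hS.ne', Real.log_mul (ha x).ne' hc.ne',
          Real.log_div hS.ne' hc.ne']
        ring
      rw [h2] at h1
      have := mul_le_mul_of_nonneg_left h1 h.le
      calc u x * Real.log (a x) - u x * Real.log (S / c)
          = u x * (Real.log (a x) - Real.log (S / c)) := by ring
        _ ≤ u x * (a x * c / S - 1) := this
        _ = u x * a x * (c / S) - u x := by ring
  have hsum : ∑ x, (u x * Real.log (a x) - u x * Real.log (S / c)) ≤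
      ∑ x, (u x * a x * (c / S) - u x) := Finset.sum_le_sum (fun x _ => key x)
  rw [Finset.sum_sub_distrib, Finset.sum_sub_distrib, ← Finset.sum_mul, hu1,
    ← Finset.sum_mul, hS1] at hsum
  have : S * (c / S) = c := by field_simp
  linarith [hsum, this]

private lemma grad_ineq (f f' : ℝ → ℝ) (hfconv : ConvexOn ℝ (Set.Ioi 0) f)
    (hf' : ∀ x ∈ Set.Ioi (0 : ℝ), HasDerivAt f (f' x) x) {a b : ℝ} (ha : 0 < a) (hb : 0 < b) :
    f a + f' a * (b - a) ≤ f b := by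
  rcases lt_trichotomy a b with h | h | h
  · have hs := hfconv.le_slope_of_hasDerivAt (Set.mem_Ioi.mpr ha) (Set.mem_Ioi.mpr hb) h
      (hf' a (Set.mem_Ioi.mpr ha))
    rw [slope_def_field, le_div_iff₀ (by linarith)] at hs
    linarith
  · subst h; simp
  · have hs := hfconv.slope_le_of_hasDerivAt (Set.mem_Ioi.mpr hb) (Set.mem_Ioi.mpr ha) h
      (hf' a (Set.mem_Ioi.mpr ha))
    rw [slope_def_field, div_le_iff₀ (by linarith)] at hs
    linarith

private lemma double_sum_split [Fintype X] (u : X → X → ℝ) (c e m r : X → ℝ)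
    (hm : ∀ y, ∑ x, u x y = m y) (hr : ∀ x, ∑ y, u x y = r x) :
    ∑ y, ∑ x, u x y * (c y + e x) = ∑ y, m y * c y + ∑ x, r x * e x := by
  have h1 : ∑ y, ∑ x, u x y * c y = ∑ y, m y * c y := by
    refine Finset.sum_congr rfl fun y _ => ?_
    rw [← Finset.sum_mul, hm y]
  have h2 : ∑ y, ∑ x, u x y * e x = ∑ x, r x * e x := by
    rw [Finset.sum_comm]
    refine Finset.sum_congr rfl fun x _ => ?_
    rw [← Finset.sum_mul, hr x]
  calc ∑ y, ∑ x, u x y * (c y + e x) = ∑ y, (∑ x, u x y * c y + ∑ x, u x y * e x) := by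
        refine Finset.sum_congr rfl fun y _ => ?_
        rw [← Finset.sum_add_distrib]
        exact Finset.sum_congr rfl fun x _ => by ring
    _ = ∑ y, ∑ x, u x y * c y + ∑ y, ∑ x, u x y * e x := Finset.sum_add_distrib
    _ = _ := by rw [h1, h2]

/-- split for channels: `∑_y ∑_x p x * Q x y * (c y + e x)`. -/
private lemma channel_split [Fintype X] (p m : X → ℝ) (Q : X → X → ℝ) (c e : X → ℝ)
    (hm : ∀ y, ∑ x, p x * Q x y = m y) (hr : ∀ x, ∑ y, Q x y = 1) :
    ∑ y, ∑ x, p x * Q x y * (c y + e x) = ∑ y, m y * c y + ∑ x, p x * e x := by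
  have := double_sum_split (fun x y => p x * Q x y) c e m p hm
    (fun x => by rw [← Finset.mul_sum, hr x, mul_one])
  simpa using this

private lemma sum_mul_sub [Fintype X] (a u v : X → ℝ) :
    ∑ y, a y * (u y - v y) = ∑ y, a y * u y - ∑ y, a y * v y := by
  rw [← Finset.sum_sub_distrib]; exact Finset.sum_congr rfl fun y _ => by ring

private lemma sum_mul_add [Fintype X] (a u v : X → ℝ) :
    ∑ y, a y * (u y + v y) = ∑ y, a y * u y + ∑ y, a y * v y := by
  rw [← Finset.sum_add_distrib]; exact Finset.sum_congr rfl fun y _ => by ring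

private lemma sum_mul_const [Fintype X] (s : ℝ) (a u : X → ℝ) :
    ∑ y, a y * (s * u y) = s * ∑ y, a y * u y := by
  rw [Finset.mul_sum]; exact Finset.sum_congr rfl fun y _ => by ring

/-- the `g` function `g(p y / q y)` with `g(r) = f(r) - r f'(r)`. -/
private noncomputable def gfun (f f' : ℝ → ℝ) (p q : X → ℝ) (y : X) : ℝ :=
  f (p y / q y) - p y / q y * f' (p y / q y)

/-- partition function. -/
private noncomputable def Zfun [Fintype X] (q : X → ℝ) (B : X → X → ℝ) (x : X) : ℝ :=
  ∑ i, q i * B x i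

set_option maxHeartbeats 2000000 in
/-- Sandwich bound in the OAM convergence proof: for every `n ≥ 1`,
`0 ≤ W_n − V(Q*) ≤ Σ_{x,y} p(x)Q*(y|x) log(Q^{(n+1)}(y|x)/Q^{(n)}(y|x))`
(stated with index `n + 1`, which ranges over all integers `≥ 1`). -/
theorem OAM_sandwich_bound [Fintype X] [Nonempty X]
    (p : X → ℝ) (hp : ∀ x, 0 < p x) (hp1 : ∑ x, p x = 1)
    (d : X → X → ℝ) (hd : ∀ x y, 0 ≤ d x y)
    (sD sP : ℝ) (hsD : 0 ≤ sD) (hsP : 0 ≤ sP)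
    (f f' : ℝ → ℝ) (hfconv : ConvexOn ℝ (Set.Ioi 0) f)
    (hf' : ∀ x ∈ Set.Ioi (0 : ℝ), HasDerivAt f (f' x) x) (hf1 : f 1 = 0)
    (qseq : ℕ → X → ℝ) (hqpos : ∀ n y, 0 < qseq n y) (hqsum : ∀ n, ∑ y, qseq n y = 1)
    (A : ℕ → X → X → ℝ)
    (hA : ∀ n x y, A n x y = Real.exp (-(sD * d x y) - sP *
        (f (p y / qseq (n + 1) y) - p y / qseq (n + 1) y * f' (p y / qseq (n + 1) y))))
    (hiter : ∀ n y, qseq (n + 1) y =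
        qseq n y * ∑ x, p x * A n x y / (∑ i, qseq n i * A n x i))
    (Qit : ℕ → X → X → ℝ)
    (hQit : ∀ n x y, Qit (n + 1) x y = qseq n y * A n x y / ∑ i, qseq n i * A n x i)
    (qstar : X → ℝ) (hqs : ∀ y, 0 < qstar y) (hqs1 : ∑ y, qstar y = 1)
    (As : X → X → ℝ)
    (hAs : ∀ x y, As x y = Real.exp (-(sD * d x y) - sP *
        (f (p y / qstar y) - p y / qstar y * f' (p y / qstar y))))
    (hfix : ∀ y, ∑ x, p x * As x y / (∑ i, qstar i * As x i) = 1)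
    (Qstar : X → X → ℝ)
    (hQstar : ∀ x y, Qstar x y = qstar y * As x y / ∑ i, qstar i * As x i)
    (W : ℕ → ℝ)
    (hW : ∀ n, W n = sP * ∑ y, p y * f' (p y / qseq (n + 1) y)
        - ∑ x, p x * Real.log (∑ y, qseq n y * A n x y)) :
    ∀ n : ℕ,
      0 ≤ W (n + 1) - Vfun p d sD sP f Qstar ∧
      W (n + 1) - Vfun p d sD sP f Qstar ≤
        ∑ x, ∑ y, p x * Qstar x y * Real.log (Qit (n + 2) x y / Qit (n + 1) x y) := by
  intro n
  have hq0 := hqpos n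
  have hq1 := hqpos (n+1)
  have hq2 := hqpos (n+2)
  -- positivity of the kernels
  have hAsp : ∀ x y, 0 < As x y := fun x y => by rw [hAs]; exact Real.exp_pos _
  have hA0p : ∀ x y, 0 < A n x y := fun x y => by rw [hA]; exact Real.exp_pos _
  have hA1p : ∀ x y, 0 < A (n+1) x y := fun x y => by rw [hA]; exact Real.exp_pos _
  have hZsp : ∀ x, 0 < Zfun qstar As x := fun x =>
    Finset.sum_pos (fun i _ => mul_pos (hqs i) (hAsp x i)) Finset.univ_nonempty
  have hZ0p : ∀ x, 0 < Zfun (qseq n) (A n) x := fun x =>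
    Finset.sum_pos (fun i _ => mul_pos (hq0 i) (hA0p x i)) Finset.univ_nonempty
  have hZ1p : ∀ x, 0 < Zfun (qseq (n+1)) (A (n+1)) x := fun x =>
    Finset.sum_pos (fun i _ => mul_pos (hq1 i) (hA1p x i)) Finset.univ_nonempty
  -- channel formulas
  have hQsd : ∀ x y, Qstar x y = qstar y * As x y / Zfun qstar As x := fun x y => hQstar x y
  have hQ1d : ∀ x y, Qit (n+1) x y = qseq n y * A n x y / Zfun (qseq n) (A n) x :=
    fun x y => hQit n x y
  have hQ2d : ∀ x y, Qit (n+2) x y = qseq (n+1) y * A (n+1) x y / Zfun (qseq (n+1)) (A (n+1)) x :=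
    fun x y => hQit (n+1) x y
  have hQsp : ∀ x y, 0 < Qstar x y := fun x y => by
    rw [hQsd]; exact div_pos (mul_pos (hqs y) (hAsp x y)) (hZsp x)
  have hQ1p : ∀ x y, 0 < Qit (n+1) x y := fun x y => by
    rw [hQ1d]; exact div_pos (mul_pos (hq0 y) (hA0p x y)) (hZ0p x)
  have hQ2p : ∀ x y, 0 < Qit (n+2) x y := fun x y => by
    rw [hQ2d]; exact div_pos (mul_pos (hq1 y) (hA1p x y)) (hZ1p x)
  have hfix' : ∀ y, ∑ x, p x * As x y / Zfun qstar As x = 1 := hfix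
  have hit0 : ∀ y, qseq (n+1) y = qseq n y * ∑ x, p x * A n x y / Zfun (qseq n) (A n) x :=
    fun y => hiter n y
  have hit1 : ∀ y, qseq (n+2) y
      = qseq (n+1) y * ∑ x, p x * A (n+1) x y / Zfun (qseq (n+1)) (A (n+1)) x :=
    fun y => hiter (n+1) y
  -- logs of kernels
  have hlogAs : ∀ x y, Real.log (As x y) = -(sD * d x y) - sP * gfun f f' p qstar y :=
    fun x y => by rw [hAs]; exact Real.log_exp _
  have hlogA0 : ∀ x y, Real.log (A n x y) = -(sD * d x y) - sP * gfun f f' p (qseq (n+1)) y :=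
    fun x y => by rw [hA]; exact Real.log_exp _
  have hlogA1 : ∀ x y, Real.log (A (n+1) x y) = -(sD * d x y) - sP * gfun f f' p (qseq (n+2)) y :=
    fun x y => by rw [hA]; exact Real.log_exp _
  -- marginals and row sums
  have hmargs : ∀ y, ∑ x, p x * Qstar x y = qstar y := by
    intro y
    have h1 : ∀ x, p x * Qstar x y = qstar y * (p x * As x y / Zfun qstar As x) := fun x => by
      rw [hQsd]; ring
    rw [Finset.sum_congr rfl fun x _ => h1 x, ← Finset.mul_sum, hfix' y, mul_one]
  have hrowsQs : ∀ x, ∑ y, Qstar x y = 1 := by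
    intro x
    rw [Finset.sum_congr rfl fun y _ => hQsd x y, ← Finset.sum_div]
    exact div_self (hZsp x).ne'
  have hrowsQ2 : ∀ x, ∑ y, Qit (n+2) x y = 1 := by
    intro x
    rw [Finset.sum_congr rfl fun y _ => hQ2d x y, ← Finset.sum_div]
    exact div_self (hZ1p x).ne'
  have hmarg2 : ∀ y, ∑ x, p x * Qit (n+2) x y = qseq (n+2) y := by
    intro y
    have h1 : ∀ x, p x * Qit (n+2) x y
        = qseq (n+1) y * (p x * A (n+1) x y / Zfun (qseq (n+1)) (A (n+1)) x) := fun x => by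
      rw [hQ2d]; ring
    rw [Finset.sum_congr rfl fun x _ => h1 x, ← Finset.mul_sum]
    exact (hit1 y).symm
  -- the value of V at Qstar
  have hmargfun : marg p Qstar = qstar := funext fun y => hmargs y
  have hgsum : ∑ y, qstar y * gfun f f' p qstar y
      = ∑ y, qstar y * f (p y / qstar y) - ∑ y, p y * f' (p y / qstar y) := by
    rw [← Finset.sum_sub_distrib]
    refine Finset.sum_congr rfl fun y _ => ?_
    have hc : qstar y * (p y / qstar y) = p y := by
      rw [mul_comm]; exact div_mul_cancel₀ _ (hqs y).ne'
    simp only [gfun]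
    linear_combination (- f' (p y / qstar y)) * hc
  have hdistr : ∑ x, ∑ y, p x * Qstar x y * (-(sD * d x y))
      = -(sD * ∑ x, ∑ y, p x * Qstar x y * d x y) := by
    rw [Finset.mul_sum, ← Finset.sum_neg_distrib]
    refine Finset.sum_congr rfl fun x _ => ?_
    rw [Finset.mul_sum, ← Finset.sum_neg_distrib]
    exact Finset.sum_congr rfl fun y _ => by ring
  have hsplit2 : ∑ x, ∑ y, p x * Qstar x y
        * ((-(sP * gfun f f' p qstar y)) + (-(Real.log (Zfun qstar As x))))
      = ∑ y, qstar y * (-(sP * gfun f f' p qstar y))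
        + ∑ x, p x * (-(Real.log (Zfun qstar As x))) := by
    rw [Finset.sum_comm]
    exact channel_split p qstar Qstar _ _ hmargs hrowsQs
  have hmut : mutInfo p Qstar = -(sD * ∑ x, ∑ y, p x * Qstar x y * d x y)
      + (∑ y, qstar y * (-(sP * gfun f f' p qstar y))
        + ∑ x, p x * (-(Real.log (Zfun qstar As x)))) := by
    have hlogQ : ∀ x y, Real.log (Qstar x y / marg p Qstar y)
        = -(sD * d x y) + ((-(sP * gfun f f' p qstar y)) + (-(Real.log (Zfun qstar As x)))) := by
      intro x y
      rw [hmargfun]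
      have h1 : Qstar x y / qstar y = As x y / Zfun qstar As x := by
        rw [hQsd, div_div, mul_comm (Zfun qstar As x) (qstar y), ← div_div,
          mul_div_cancel_left₀ _ (hqs y).ne']
      rw [h1, Real.log_div (hAsp x y).ne' (hZsp x).ne', hlogAs]
      ring
    simp only [mutInfo]
    calc ∑ x, ∑ y, p x * Qstar x y * Real.log (Qstar x y / marg p Qstar y)
        = ∑ x, ∑ y, (p x * Qstar x y * (-(sD * d x y)) + p x * Qstar x y
            * ((-(sP * gfun f f' p qstar y)) + (-(Real.log (Zfun qstar As x))))) := by
          refine Finset.sum_congr rfl fun x _ => Finset.sum_congr rfl fun y _ => ?_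
          rw [hlogQ x y]; ring
      _ = ∑ x, ∑ y, p x * Qstar x y * (-(sD * d x y)) + ∑ x, ∑ y, p x * Qstar x y
            * ((-(sP * gfun f f' p qstar y)) + (-(Real.log (Zfun qstar As x)))) := by
          simp only [Finset.sum_add_distrib]
      _ = _ := by rw [hdistr, hsplit2]
  have hVal : Vfun p d sD sP f Qstar
      = sP * (∑ y, p y * f' (p y / qstar y)) - ∑ x, p x * Real.log (Zfun qstar As x) := by
    have hfd : fDiv f p (marg p Qstar) = ∑ y, qstar y * f (p y / qstar y) := by
      rw [hmargfun]; rfl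
    have e1 : ∑ y, qstar y * (-(sP * gfun f f' p qstar y))
        = -(sP * ∑ y, qstar y * gfun f f' p qstar y) := by
      rw [Finset.mul_sum, ← Finset.sum_neg_distrib]
      exact Finset.sum_congr rfl fun y _ => by ring
    have e2 : ∑ x, p x * (-(Real.log (Zfun qstar As x)))
        = -(∑ x, p x * Real.log (Zfun qstar As x)) := by
      rw [← Finset.sum_neg_distrib]
      exact Finset.sum_congr rfl fun x _ => by ring
    have hdist' : distortion p d Qstar = ∑ x, ∑ y, p x * Qstar x y * d x y := rfl
    simp only [Vfun]
    rw [hmut, hfd, e1, e2, hdist']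
    linear_combination (-sP) * hgsum
  -- the value of W (n+1)
  have hWval : W (n + 1) = sP * (∑ y, p y * f' (p y / qseq (n+2) y))
      - ∑ x, p x * Real.log (Zfun (qseq (n+1)) (A (n+1)) x) := hW (n+1)
  -- ===== lower bound =====
  have hjen2 : ∀ y, ∑ x, (p x * Qit (n+2) x y)
      * Real.log (As x y * qseq (n+2) y / (Qit (n+2) x y * Zfun qstar As x)) ≤ 0 := by
    intro y
    have hSsum : ∑ x, (p x * Qit (n+2) x y)
        * (As x y * qseq (n+2) y / (Qit (n+2) x y * Zfun qstar As x)) = qseq (n+2) y := by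
      have h1 : ∀ x, (p x * Qit (n+2) x y)
          * (As x y * qseq (n+2) y / (Qit (n+2) x y * Zfun qstar As x))
          = qseq (n+2) y * (p x * As x y / Zfun qstar As x) := by
        intro x
        have h2 : Qit (n+2) x y ≠ 0 := (hQ2p x y).ne'
        have h3 : Zfun qstar As x ≠ 0 := (hZsp x).ne'
        field_simp
      rw [Finset.sum_congr rfl fun x _ => h1 x, ← Finset.mul_sum, hfix' y, mul_one]
    have h := weighted_log_le (fun x => p x * Qit (n+2) x y)
        (fun x => As x y * qseq (n+2) y / (Qit (n+2) x y * Zfun qstar As x))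
        (qseq (n+2) y) (qseq (n+2) y)
        (fun x => (mul_pos (hp x) (hQ2p x y)).le)
        (fun x => div_pos (mul_pos (hAsp x y) (hq2 y)) (mul_pos (hQ2p x y) (hZsp x)))
        (hq2 y) (hq2 y) (hmarg2 y) hSsum
    simpa [div_self (hq2 y).ne'] using h
  have hlog2 : ∀ x y, Real.log (As x y * qseq (n+2) y / (Qit (n+2) x y * Zfun qstar As x))
      = (sP * (gfun f f' p (qseq (n+2)) y - gfun f f' p qstar y)
          + (Real.log (qseq (n+2) y) - Real.log (qseq (n+1) y)))
        + (Real.log (Zfun (qseq (n+1)) (A (n+1)) x) - Real.log (Zfun qstar As x)) := by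
    intro x y
    rw [Real.log_div (mul_pos (hAsp x y) (hq2 y)).ne' (mul_pos (hQ2p x y) (hZsp x)).ne',
      Real.log_mul (hAsp x y).ne' (hq2 y).ne',
      Real.log_mul (hQ2p x y).ne' (hZsp x).ne',
      hQ2d, Real.log_div (mul_pos (hq1 y) (hA1p x y)).ne' (hZ1p x).ne',
      Real.log_mul (hq1 y).ne' (hA1p x y).ne', hlogAs, hlogA1]
    ring
  have hlow : ∑ y, qseq (n+2) y * (sP * (gfun f f' p (qseq (n+2)) y - gfun f f' p qstar y)
        + (Real.log (qseq (n+2) y) - Real.log (qseq (n+1) y)))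
      + ∑ x, p x * (Real.log (Zfun (qseq (n+1)) (A (n+1)) x) - Real.log (Zfun qstar As x))
      ≤ 0 := by
    have hs : ∑ y, ∑ x, p x * Qit (n+2) x y
        * ((sP * (gfun f f' p (qseq (n+2)) y - gfun f f' p qstar y)
            + (Real.log (qseq (n+2) y) - Real.log (qseq (n+1) y)))
          + (Real.log (Zfun (qseq (n+1)) (A (n+1)) x) - Real.log (Zfun qstar As x))) ≤ 0 := by
      refine Finset.sum_nonpos fun y _ => ?_
      calc ∑ x, p x * Qit (n+2) x y
            * ((sP * (gfun f f' p (qseq (n+2)) y - gfun f f' p qstar y)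
                + (Real.log (qseq (n+2) y) - Real.log (qseq (n+1) y)))
              + (Real.log (Zfun (qseq (n+1)) (A (n+1)) x) - Real.log (Zfun qstar As x)))
          = ∑ x, (p x * Qit (n+2) x y)
            * Real.log (As x y * qseq (n+2) y / (Qit (n+2) x y * Zfun qstar As x)) := by
            refine Finset.sum_congr rfl fun x _ => ?_
            rw [hlog2 x y]
        _ ≤ 0 := hjen2 y
    rw [channel_split p (qseq (n+2)) (Qit (n+2))
      (fun y => sP * (gfun f f' p (qseq (n+2)) y - gfun f f' p qstar y)
        + (Real.log (qseq (n+2) y) - Real.log (qseq (n+1) y)))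
      (fun x => Real.log (Zfun (qseq (n+1)) (A (n+1)) x) - Real.log (Zfun qstar As x))
      hmarg2 hrowsQ2] at hs
    exact hs
  have hKL : 0 ≤ ∑ y, qseq (n+2) y * (Real.log (qseq (n+2) y) - Real.log (qseq (n+1) y)) := by
    have hSsum : ∑ y, qseq (n+2) y * (qseq (n+1) y / qseq (n+2) y) = 1 := by
      have h1 : ∀ y, qseq (n+2) y * (qseq (n+1) y / qseq (n+2) y) = qseq (n+1) y := fun y => by
        rw [mul_comm]; exact div_mul_cancel₀ _ (hq2 y).ne'
      rw [Finset.sum_congr rfl fun y _ => h1 y]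
      exact hqsum (n+1)
    have h := weighted_log_le (fun y => qseq (n+2) y) (fun y => qseq (n+1) y / qseq (n+2) y) 1 1
      (fun y => (hq2 y).le) (fun y => div_pos (hq1 y) (hq2 y)) one_pos one_pos
      (hqsum (n+2)) hSsum
    have h2 : ∑ y, qseq (n+2) y * (Real.log (qseq (n+1) y) - Real.log (qseq (n+2) y)) ≤ 0 := by
      calc ∑ y, qseq (n+2) y * (Real.log (qseq (n+1) y) - Real.log (qseq (n+2) y))
          = ∑ y, qseq (n+2) y * Real.log (qseq (n+1) y / qseq (n+2) y) :=
            Finset.sum_congr rfl fun y _ => by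
              rw [Real.log_div (hq1 y).ne' (hq2 y).ne']
        _ ≤ 0 := by simpa using h
    have h3 : ∑ y, qseq (n+2) y * (Real.log (qseq (n+2) y) - Real.log (qseq (n+1) y))
        = -(∑ y, qseq (n+2) y * (Real.log (qseq (n+1) y) - Real.log (qseq (n+2) y))) := by
      rw [← Finset.sum_neg_distrib]
      exact Finset.sum_congr rfl fun y _ => by ring
    linarith
  have hBreg1 : 0 ≤ ∑ y, (qseq (n+2) y * (gfun f f' p (qseq (n+2)) y - gfun f f' p qstar y)
      + (p y * f' (p y / qseq (n+2) y) - p y * f' (p y / qstar y))) := by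
    refine Finset.sum_nonneg fun y _ => ?_
    have hr2 : 0 < p y / qseq (n+2) y := div_pos (hp y) (hq2 y)
    have hrs : 0 < p y / qstar y := div_pos (hp y) (hqs y)
    have hgi := grad_ineq f f' hfconv hf' hrs hr2
    have hc2 : qseq (n+2) y * (p y / qseq (n+2) y) = p y := by
      rw [mul_comm]; exact div_mul_cancel₀ _ (hq2 y).ne'
    have key : 0 ≤ qseq (n+2) y * (f (p y / qseq (n+2) y) - (f (p y / qstar y)
        + f' (p y / qstar y) * (p y / qseq (n+2) y - p y / qstar y))) :=
      mul_nonneg (hq2 y).le (by linarith)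
    have e1 : p y * f' (p y / qseq (n+2) y)
        = qseq (n+2) y * (p y / qseq (n+2) y) * f' (p y / qseq (n+2) y) := by rw [hc2]
    have e2 : p y * f' (p y / qstar y)
        = qseq (n+2) y * (p y / qseq (n+2) y) * f' (p y / qstar y) := by rw [hc2]
    simp only [gfun]
    nlinarith [key, e1, e2]
  have hBsplit1 : ∑ y, (qseq (n+2) y * (gfun f f' p (qseq (n+2)) y - gfun f f' p qstar y)
        + (p y * f' (p y / qseq (n+2) y) - p y * f' (p y / qstar y)))
      = ∑ y, qseq (n+2) y * (gfun f f' p (qseq (n+2)) y - gfun f f' p qstar y)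
        + ((∑ y, p y * f' (p y / qseq (n+2) y)) - ∑ y, p y * f' (p y / qstar y)) := by
    rw [Finset.sum_add_distrib, Finset.sum_sub_distrib]
  -- ===== upper bound pieces =====
  have hjen1 : ∀ y, ∑ x, (p x * Qstar x y)
      * Real.log (A n x y * qstar y / (Qstar x y * Zfun (qseq n) (A n) x))
      ≤ qstar y * Real.log (qseq (n+1) y / qseq n y) := by
    intro y
    have hratio : ∑ x, p x * A n x y / Zfun (qseq n) (A n) x = qseq (n+1) y / qseq n y := by
      rw [hit0 y, mul_div_cancel_left₀ _ (hq0 y).ne']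
    have hSsum : ∑ x, (p x * Qstar x y)
        * (A n x y * qstar y / (Qstar x y * Zfun (qseq n) (A n) x))
        = qstar y * (qseq (n+1) y / qseq n y) := by
      have h1 : ∀ x, (p x * Qstar x y)
          * (A n x y * qstar y / (Qstar x y * Zfun (qseq n) (A n) x))
          = qstar y * (p x * A n x y / Zfun (qseq n) (A n) x) := by
        intro x
        have h2 : Qstar x y ≠ 0 := (hQsp x y).ne'
        have h3 : Zfun (qseq n) (A n) x ≠ 0 := (hZ0p x).ne'
        field_simp
      rw [Finset.sum_congr rfl fun x _ => h1 x, ← Finset.mul_sum, hratio]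
    have h := weighted_log_le (fun x => p x * Qstar x y)
        (fun x => A n x y * qstar y / (Qstar x y * Zfun (qseq n) (A n) x))
        (qstar y) (qstar y * (qseq (n+1) y / qseq n y))
        (fun x => (mul_pos (hp x) (hQsp x y)).le)
        (fun x => div_pos (mul_pos (hA0p x y) (hqs y)) (mul_pos (hQsp x y) (hZ0p x)))
        (hqs y) (mul_pos (hqs y) (div_pos (hq1 y) (hq0 y)))
        (hmargs y) hSsum
    rwa [mul_div_cancel_left₀ _ (hqs y).ne'] at h
  have hlog1 : ∀ x y, Real.log (A n x y * qstar y / (Qstar x y * Zfun (qseq n) (A n) x))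
      = (sP * (gfun f f' p qstar y - gfun f f' p (qseq (n+1)) y))
        + (Real.log (Zfun qstar As x) - Real.log (Zfun (qseq n) (A n) x)) := by
    intro x y
    rw [Real.log_div (mul_pos (hA0p x y) (hqs y)).ne' (mul_pos (hQsp x y) (hZ0p x)).ne',
      Real.log_mul (hA0p x y).ne' (hqs y).ne',
      Real.log_mul (hQsp x y).ne' (hZ0p x).ne',
      hQsd, Real.log_div (mul_pos (hqs y) (hAsp x y)).ne' (hZsp x).ne',
      Real.log_mul (hqs y).ne' (hAsp x y).ne', hlogAs, hlogA0]
    ring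
  have hup1 : ∑ y, qstar y * (sP * (gfun f f' p qstar y - gfun f f' p (qseq (n+1)) y))
      + ∑ x, p x * (Real.log (Zfun qstar As x) - Real.log (Zfun (qseq n) (A n) x))
      ≤ ∑ y, qstar y * Real.log (qseq (n+1) y / qseq n y) := by
    have hs : ∑ y, ∑ x, p x * Qstar x y
        * ((sP * (gfun f f' p qstar y - gfun f f' p (qseq (n+1)) y))
          + (Real.log (Zfun qstar As x) - Real.log (Zfun (qseq n) (A n) x)))
        ≤ ∑ y, qstar y * Real.log (qseq (n+1) y / qseq n y) := by
      refine Finset.sum_le_sum fun y _ => ?_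
      calc ∑ x, p x * Qstar x y
            * ((sP * (gfun f f' p qstar y - gfun f f' p (qseq (n+1)) y))
              + (Real.log (Zfun qstar As x) - Real.log (Zfun (qseq n) (A n) x)))
          = ∑ x, (p x * Qstar x y)
            * Real.log (A n x y * qstar y / (Qstar x y * Zfun (qseq n) (A n) x)) := by
            refine Finset.sum_congr rfl fun x _ => ?_
            rw [hlog1 x y]
        _ ≤ qstar y * Real.log (qseq (n+1) y / qseq n y) := hjen1 y
    rw [channel_split p qstar Qstar
      (fun y => sP * (gfun f f' p qstar y - gfun f f' p (qseq (n+1)) y))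
      (fun x => Real.log (Zfun qstar As x) - Real.log (Zfun (qseq n) (A n) x))
      hmargs hrowsQs] at hs
    exact hs
  have hT : ∑ x, ∑ y, p x * Qstar x y * Real.log (Qit (n+2) x y / Qit (n+1) x y)
      = ∑ y, qstar y * (Real.log (qseq (n+1) y / qseq n y)
          + sP * (gfun f f' p (qseq (n+1)) y - gfun f f' p (qseq (n+2)) y))
        + ∑ x, p x * (Real.log (Zfun (qseq n) (A n) x)
          - Real.log (Zfun (qseq (n+1)) (A (n+1)) x)) := by
    have hlogR : ∀ x y, Real.log (Qit (n+2) x y / Qit (n+1) x y)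
        = (Real.log (qseq (n+1) y / qseq n y)
            + sP * (gfun f f' p (qseq (n+1)) y - gfun f f' p (qseq (n+2)) y))
          + (Real.log (Zfun (qseq n) (A n) x) - Real.log (Zfun (qseq (n+1)) (A (n+1)) x)) := by
      intro x y
      rw [Real.log_div (hQ2p x y).ne' (hQ1p x y).ne', hQ2d, hQ1d,
        Real.log_div (mul_pos (hq1 y) (hA1p x y)).ne' (hZ1p x).ne',
        Real.log_div (mul_pos (hq0 y) (hA0p x y)).ne' (hZ0p x).ne',
        Real.log_mul (hq1 y).ne' (hA1p x y).ne', Real.log_mul (hq0 y).ne' (hA0p x y).ne',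
        hlogA0, hlogA1, Real.log_div (hq1 y).ne' (hq0 y).ne']
      ring
    calc ∑ x, ∑ y, p x * Qstar x y * Real.log (Qit (n+2) x y / Qit (n+1) x y)
        = ∑ y, ∑ x, p x * Qstar x y
          * ((Real.log (qseq (n+1) y / qseq n y)
              + sP * (gfun f f' p (qseq (n+1)) y - gfun f f' p (qseq (n+2)) y))
            + (Real.log (Zfun (qseq n) (A n) x)
              - Real.log (Zfun (qseq (n+1)) (A (n+1)) x))) := by
          rw [Finset.sum_comm]
          exact Finset.sum_congr rfl fun y _ => Finset.sum_congr rfl fun x _ => by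
            rw [hlogR x y]
      _ = _ := channel_split p qstar Qstar _ _ hmargs hrowsQs
  have hBreg2 : 0 ≤ ∑ y, (qstar y * (gfun f f' p qstar y - gfun f f' p (qseq (n+2)) y)
      - (p y * f' (p y / qseq (n+2) y) - p y * f' (p y / qstar y))) := by
    refine Finset.sum_nonneg fun y _ => ?_
    have hr2 : 0 < p y / qseq (n+2) y := div_pos (hp y) (hq2 y)
    have hrs : 0 < p y / qstar y := div_pos (hp y) (hqs y)
    have hgi := grad_ineq f f' hfconv hf' hr2 hrs
    have hcs : qstar y * (p y / qstar y) = p y := by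
      rw [mul_comm]; exact div_mul_cancel₀ _ (hqs y).ne'
    have key : 0 ≤ qstar y * (f (p y / qstar y) - (f (p y / qseq (n+2) y)
        + f' (p y / qseq (n+2) y) * (p y / qstar y - p y / qseq (n+2) y))) :=
      mul_nonneg (hqs y).le (by linarith)
    have e1 : p y * f' (p y / qseq (n+2) y)
        = qstar y * (p y / qstar y) * f' (p y / qseq (n+2) y) := by rw [hcs]
    have e2 : p y * f' (p y / qstar y)
        = qstar y * (p y / qstar y) * f' (p y / qstar y) := by rw [hcs]
    simp only [gfun]
    nlinarith [key, e1, e2]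
  have hBsplit2 : ∑ y, (qstar y * (gfun f f' p qstar y - gfun f f' p (qseq (n+2)) y)
        - (p y * f' (p y / qseq (n+2) y) - p y * f' (p y / qstar y)))
      = ∑ y, qstar y * (gfun f f' p qstar y - gfun f f' p (qseq (n+2)) y)
        - ((∑ y, p y * f' (p y / qseq (n+2) y)) - ∑ y, p y * f' (p y / qstar y)) := by
    rw [Finset.sum_sub_distrib, Finset.sum_sub_distrib]
  -- ===== conclusion =====
  constructor
  · -- lower bound
    have hsl : ∑ y, qseq (n+2) y * (sP * (gfun f f' p (qseq (n+2)) y - gfun f f' p qstar y)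
          + (Real.log (qseq (n+2) y) - Real.log (qseq (n+1) y)))
        = sP * (∑ y, qseq (n+2) y * (gfun f f' p (qseq (n+2)) y - gfun f f' p qstar y))
          + ∑ y, qseq (n+2) y * (Real.log (qseq (n+2) y) - Real.log (qseq (n+1) y)) := by
      rw [sum_mul_add, sum_mul_const]
    have hsz : ∑ x, p x * (Real.log (Zfun (qseq (n+1)) (A (n+1)) x)
          - Real.log (Zfun qstar As x))
        = (∑ x, p x * Real.log (Zfun (qseq (n+1)) (A (n+1)) x))
          - ∑ x, p x * Real.log (Zfun qstar As x) := sum_mul_sub _ _ _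
    rw [hsl, hsz] at hlow
    have hB1 : 0 ≤ sP * (∑ y, qseq (n+2) y
        * (gfun f f' p (qseq (n+2)) y - gfun f f' p qstar y)
        + ((∑ y, p y * f' (p y / qseq (n+2) y)) - ∑ y, p y * f' (p y / qstar y))) := by
      refine mul_nonneg hsP ?_
      rw [← hBsplit1]
      exact hBreg1
    rw [hWval, hVal]
    nlinarith [hlow, hKL, hB1]
  · -- upper bound
    have hst : ∑ y, qstar y * (Real.log (qseq (n+1) y / qseq n y)
          + sP * (gfun f f' p (qseq (n+1)) y - gfun f f' p (qseq (n+2)) y))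
        = ∑ y, qstar y * Real.log (qseq (n+1) y / qseq n y)
          + sP * ∑ y, qstar y * (gfun f f' p (qseq (n+1)) y - gfun f f' p (qseq (n+2)) y) := by
      rw [sum_mul_add, sum_mul_const]
    have hsz01 : ∑ x, p x * (Real.log (Zfun (qseq n) (A n) x)
          - Real.log (Zfun (qseq (n+1)) (A (n+1)) x))
        = (∑ x, p x * Real.log (Zfun (qseq n) (A n) x))
          - ∑ x, p x * Real.log (Zfun (qseq (n+1)) (A (n+1)) x) := sum_mul_sub _ _ _
    have hszs0 : ∑ x, p x * (Real.log (Zfun qstar As x) - Real.log (Zfun (qseq n) (A n) x))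
        = (∑ x, p x * Real.log (Zfun qstar As x))
          - ∑ x, p x * Real.log (Zfun (qseq n) (A n) x) := sum_mul_sub _ _ _
    have hsup : ∑ y, qstar y * (sP * (gfun f f' p qstar y - gfun f f' p (qseq (n+1)) y))
        = sP * ∑ y, qstar y * (gfun f f' p qstar y - gfun f f' p (qseq (n+1)) y) :=
      sum_mul_const _ _ _
    rw [hsup, hszs0] at hup1
    have hg3 : ∑ y, qstar y * (gfun f f' p qstar y - gfun f f' p (qseq (n+1)) y)
          + ∑ y, qstar y * (gfun f f' p (qseq (n+1)) y - gfun f f' p (qseq (n+2)) y)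
        = ∑ y, qstar y * (gfun f f' p qstar y - gfun f f' p (qseq (n+2)) y) := by
      rw [← Finset.sum_add_distrib]
      exact Finset.sum_congr rfl fun y _ => by ring
    have hB2 : 0 ≤ sP * (∑ y, qstar y * (gfun f f' p qstar y - gfun f f' p (qseq (n+2)) y)
        - ((∑ y, p y * f' (p y / qseq (n+2) y)) - ∑ y, p y * f' (p y / qstar y))) := by
      refine mul_nonneg hsP ?_
      rw [← hBsplit2]
      exact hBreg2
    rw [hWval, hVal, hT, hst, hsz01]
    nlinarith [hup1, hB2, hg3]


end RDP
end

section
/- Let X be a nonempty finite set, p a probability vector on X with positive entries, d : X × X → [0,∞), s_D ≥ 0, s_P ≥ 0, and let f : (0,∞) → ℝ be convex and twice continuously differentiable with f(1) = 0; set g(a,b) := f(a/b) − (a/b)·f'(a/b). Let q and u be probability vectors on X with positive entries and define A(x,y) := exp(−s_D·d(x,y) − s_P·g(p(y), u(y))), Z(x) := Σ_k q(k)A(x,k), c(i) := Σ_x p(x)A(x,i)/Z(x), M(i,j) := q(i)·Σ_x p(x)·A(x,i)A(x,j)/Z(x)², C := the diagonal matrix with entries c(i), and Γ := the diagonal matrix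 with entries s_P·q(i)·(p(i)²/u(i)³)·f''(p(i)/u(i)). Then every complex eigenvalue of the matrix J_T := I + (C − M)·Γ has real part at least 1; in particular J_T is invertible. -/
namespace RDP

variable {X : Type*}

private lemma f''_nonneg_aux {f f' f'' : ℝ → ℝ}
    (hfconv : ConvexOn ℝ (Set.Ioi 0) f)
    (hf' : ∀ x ∈ Set.Ioi (0 : ℝ), HasDerivAt f (f' x) x)
    (hf'' : ∀ x ∈ Set.Ioi (0 : ℝ), HasDerivAt f' (f'' x) x)
    {x : ℝ} (hx : (0:ℝ) < x) : 0 ≤ f'' x := by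
  have hmono : MonotoneOn f' (Set.Ioi 0) := by
    have h := hfconv.monotoneOn_deriv (fun y hy => (hf' y hy).differentiableAt)
    intro a ha b hb hab
    have ea : deriv f a = f' a := (hf' a ha).deriv
    have eb : deriv f b = f' b := (hf' b hb).deriv
    rw [← ea, ← eb]; exact h ha hb hab
  have hslope : Filter.Tendsto (slope f' x) (nhdsWithin x (Set.Ioi x)) (nhds (f'' x)) := by
    have h := ((hf'' x hx).hasDerivWithinAt (s := Set.Ioi x))
    rw [hasDerivWithinAt_iff_tendsto_slope] at h
    rwa [Set.diff_singleton_eq_self (by simp : x ∉ Set.Ioi x)] at h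
  refine ge_of_tendsto hslope ?_
  filter_upwards [self_mem_nhdsWithin] with y hy
  have hxy : x < y := hy
  have h0y : (0:ℝ) < y := hx.trans hxy
  rw [slope_def_field]
  exact div_nonneg (sub_nonneg.2 (hmono hx h0y hxy.le)) (sub_nonneg.2 hxy.le)

private lemma div_am_gm_aux {qi qj a b : ℝ} (hqi : 0 < qi) (hqj : 0 < qj) :
    2 * (a * b) ≤ qj / qi * a^2 + qi / qj * b^2 := by
  rw [div_mul_eq_mul_div, div_mul_eq_mul_div, div_add_div _ _ (ne_of_gt hqi) (ne_of_gt hqj),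
    le_div_iff₀ (by positivity)]
  nlinarith [sq_nonneg (qj * a - qi * b)]

/-- The Jacobian `J_T = I + (C − M)·Γ` of the Newton root-finding functional has all of its
complex eigenvalues with real part at least `1`; in particular it is invertible. -/
theorem newton_jacobian_eigenvalues [Fintype X] [DecidableEq X] [Nonempty X]
    (p : X → ℝ) (hp : ∀ x, 0 < p x) (hp1 : ∑ x, p x = 1)
    (d : X → X → ℝ) (hd : ∀ x y, 0 ≤ d x y)
    (sD sP : ℝ) (hsD : 0 ≤ sD) (hsP : 0 ≤ sP)
    (f f' f'' : ℝ → ℝ) (hfconv : ConvexOn ℝ (Set.Ioi 0) f) (hf1 : f 1 = 0)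
    (hf' : ∀ x ∈ Set.Ioi (0 : ℝ), HasDerivAt f (f' x) x)
    (hf'' : ∀ x ∈ Set.Ioi (0 : ℝ), HasDerivAt f' (f'' x) x)
    (hf''c : ContinuousOn f'' (Set.Ioi 0))
    (q u : X → ℝ) (hq : ∀ i, 0 < q i) (hq1 : ∑ i, q i = 1)
    (hu : ∀ i, 0 < u i) (hu1 : ∑ i, u i = 1)
    (A : X → X → ℝ)
    (hA : ∀ x y, A x y = Real.exp (-(sD * d x y) - sP *
        (f (p y / u y) - p y / u y * f' (p y / u y))))
    (Z : X → ℝ) (hZ : ∀ x, Z x = ∑ k, q k * A x k)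
    (c : X → ℝ) (hcdef : ∀ i, c i = ∑ x, p x * A x i / Z x)
    (M : Matrix X X ℝ)
    (hM : ∀ i j, M i j = q i * ∑ x, p x * (A x i * A x j) / Z x ^ 2)
    (C Γ : Matrix X X ℝ) (hC : C = Matrix.diagonal c)
    (hΓ : Γ = Matrix.diagonal fun i => sP * (q i * (p i ^ 2 / u i ^ 3 * f'' (p i / u i)))) :
    (∀ μ : ℂ, HasEig ((1 + (C - M) * Γ).map (fun x : ℝ => (x : ℂ))) μ → 1 ≤ μ.re)
    ∧ IsUnit (1 + (C - M) * Γ) := by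
  classical
  have hApos : ∀ x y, 0 < A x y := fun x y => by rw [hA]; exact Real.exp_pos _
  have hZpos : ∀ x, 0 < Z x := fun x => by
    rw [hZ]
    exact Finset.sum_pos (fun k _ => mul_pos (hq k) (hApos x k)) Finset.univ_nonempty
  obtain ⟨g, hgd⟩ : ∃ g : X → ℝ,
      ∀ i, g i = sP * (q i * (p i ^ 2 / u i ^ 3 * f'' (p i / u i))) := ⟨_, fun i => rfl⟩
  obtain ⟨N, hN⟩ : ∃ N : X → X → ℝ,
      ∀ i j, N i j = ∑ x, p x * (A x i * A x j) / Z x ^ 2 := ⟨_, fun i j => rfl⟩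
  have hg : ∀ i, 0 ≤ g i := fun i => by
    have h2 : 0 ≤ f'' (p i / u i) := f''_nonneg_aux hfconv hf' hf'' (div_pos (hp i) (hu i))
    rw [hgd]
    have hpu : 0 ≤ p i ^ 2 / u i ^ 3 :=
      div_nonneg (pow_nonneg (hp i).le 2) (pow_nonneg (hu i).le 3)
    exact mul_nonneg hsP (mul_nonneg (hq i).le (mul_nonneg hpu h2))
  have hN0 : ∀ i j, 0 ≤ N i j := fun i j => by
    rw [hN]
    exact Finset.sum_nonneg fun x _ => div_nonneg
      (mul_nonneg (hp x).le (mul_nonneg (hApos x i).le (hApos x j).le))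
      (pow_nonneg (hZpos x).le 2)
  have hNsymm : ∀ i j, N i j = N j i := fun i j => by
    rw [hN, hN]
    exact Finset.sum_congr rfl fun x _ => by ring
  have hcN : ∀ i, c i = ∑ j, q j * N i j := by
    intro i
    rw [hcdef]
    have : ∑ j, q j * N i j = ∑ x, p x * A x i / Z x := by
      calc ∑ j, q j * N i j
          = ∑ j, ∑ x, p x * A x i / Z x ^ 2 * (q j * A x j) := by
            refine Finset.sum_congr rfl fun j _ => ?_
            rw [hN, Finset.mul_sum]
            exact Finset.sum_congr rfl fun x _ => by ring
        _ = ∑ x, ∑ j, p x * A x i / Z x ^ 2 * (q j * A x j) := Finset.sum_comm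
        _ = ∑ x, p x * A x i / Z x ^ 2 * Z x := by
            refine Finset.sum_congr rfl fun x _ => ?_
            rw [← Finset.mul_sum, ← hZ]
        _ = ∑ x, p x * A x i / Z x := by
            refine Finset.sum_congr rfl fun x _ => ?_
            have hz := (hZpos x).ne'
            field_simp
    rw [this]
  have hΓd : Γ = Matrix.diagonal g := by
    rw [hΓ]; exact congrArg Matrix.diagonal (funext fun i => (hgd i).symm)
  have hJ : ∀ i j, (1 + (C - M) * Γ) i j
      = (if i = j then 1 else 0) + ((if i = j then c i else 0) - q i * N i j) * g j := by
    intro i j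
    rw [Matrix.add_apply, Matrix.one_apply, hΓd, Matrix.mul_diagonal, Matrix.sub_apply, hC,
      Matrix.diagonal_apply, hM i j, ← hN i j]
  have main : ∀ μ : ℂ, HasEig ((1 + (C - M) * Γ).map (fun x : ℝ => (x : ℂ))) μ → 1 ≤ μ.re := by
    rintro μ ⟨v, hv0, hv⟩
    obtain ⟨t, htd⟩ : ∃ t : X → ℂ, ∀ j, t j = (g j : ℂ) * v j := ⟨_, fun j => rfl⟩
    have heq : ∀ i, ∑ j, ((if i = j then (c i:ℂ) else 0) - (q i:ℂ) * (N i j:ℂ)) * t j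
        = (μ - 1) * v i := by
      intro i
      have h := congrFun hv i
      simp only [Matrix.mulVec, dotProduct, Matrix.map_apply, Pi.smul_apply,
        smul_eq_mul] at h
      have expand : ∀ j, ((1 + (C - M) * Γ) i j : ℂ) * v j
          = (if i = j then v i else 0)
            + ((if i = j then (c i:ℂ) else 0) - (q i:ℂ) * (N i j:ℂ)) * t j := by
        intro j
        rw [hJ i j, htd j]
        by_cases hij : i = j
        · subst hij; simp only [if_pos rfl]; push_cast; ring
        · simp only [if_neg hij]; push_cast; ring
      rw [Finset.sum_congr rfl (fun j _ => expand j), Finset.sum_add_distrib] at h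
      have hdelta : ∑ j, (if i = j then v i else 0) = v i := by
        simp
      rw [hdelta] at h
      linear_combination h
    have hqc : ∀ i : X, (q i : ℂ) ≠ 0 := fun i => by exact_mod_cast (hq i).ne'
    obtain ⟨r, hrd⟩ : ∃ r : ℝ, r = ∑ i, g i * Complex.normSq (v i) / q i := ⟨_, rfl⟩
    have hr0 : 0 ≤ r := by
      rw [hrd]
      exact Finset.sum_nonneg fun i _ =>
        div_nonneg (mul_nonneg (hg i) (Complex.normSq_nonneg _)) (hq i).le
    have key : ∑ i, (starRingEnd ℂ (t i) / (q i:ℂ))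
          * ∑ j, ((if i = j then (c i:ℂ) else 0) - (q i:ℂ) * (N i j:ℂ)) * t j
        = (μ - 1) * (r : ℂ) := by
      have : ((r:ℝ):ℂ) = ∑ i, ((g i * Complex.normSq (v i) / q i : ℝ) : ℂ) := by
        rw [hrd]; push_cast; rfl
      rw [this, Finset.mul_sum]
      refine Finset.sum_congr rfl fun i _ => ?_
      rw [heq i, htd i]
      have hns : ((Complex.normSq (v i) : ℝ) : ℂ) = v i * starRingEnd ℂ (v i) :=
        (Complex.mul_conj _).symm
      push_cast
      rw [hns, map_mul, Complex.conj_ofReal]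
      field_simp
    have lhs_eq : (∑ i, (starRingEnd ℂ (t i) / (q i:ℂ))
          * ∑ j, ((if i = j then (c i:ℂ) else 0) - (q i:ℂ) * (N i j:ℂ)) * t j)
        = ∑ i, ∑ j, ((N i j : ℝ):ℂ)
            * (((q j / q i : ℝ):ℂ) * ((Complex.normSq (t i):ℝ):ℂ)
               - starRingEnd ℂ (t i) * t j) := by
      refine Finset.sum_congr rfl fun i _ => ?_
      have hsum : ∑ j, ((if i = j then (c i:ℂ) else 0) - (q i:ℂ) * (N i j:ℂ)) * t j
          = (c i : ℂ) * t i - (q i:ℂ) * ∑ j, (N i j:ℂ) * t j := by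
        rw [Finset.sum_congr rfl (fun j _ => sub_mul _ _ (t j)), Finset.sum_sub_distrib]
        congr 1
        · simp [ite_mul]
        · rw [Finset.mul_sum]
          exact Finset.sum_congr rfl fun j _ => by ring
      have hci : (c i : ℂ) = ∑ j, (q j : ℂ) * (N i j : ℂ) := by
        rw [hcN i]; push_cast; rfl
      have step : (c i : ℂ) * t i - (q i:ℂ) * ∑ j, (N i j:ℂ) * t j
          = ∑ j, ((q j:ℂ) * (N i j:ℂ) * t i - (q i:ℂ) * ((N i j:ℂ) * t j)) := by
        rw [Finset.sum_sub_distrib, ← Finset.sum_mul, ← hci, ← Finset.mul_sum]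
      rw [hsum, step, Finset.mul_sum]
      refine Finset.sum_congr rfl fun j _ => ?_
      have h1 : ((Complex.normSq (t i):ℝ):ℂ) = t i * starRingEnd ℂ (t i) :=
        (Complex.mul_conj _).symm
      rw [h1]
      push_cast
      field_simp [hqc i]
    have hre : (μ - 1).re * r
        = ∑ i, ∑ j, N i j * ((q j / q i) * Complex.normSq (t i)
            - (starRingEnd ℂ (t i) * t j).re) := by
      have h := congrArg Complex.re (lhs_eq.symm.trans key)
      rw [Complex.mul_re, Complex.ofReal_re, Complex.ofReal_im, mul_zero, sub_zero] at h
      rw [← h]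
      rw [Complex.re_sum]
      refine Finset.sum_congr rfl fun i _ => ?_
      rw [Complex.re_sum]
      refine Finset.sum_congr rfl fun j _ => ?_
      simp only [Complex.re_ofReal_mul, Complex.sub_re, Complex.ofReal_re]
      try ring
    have hRe2 : ∀ a b : ℂ, (starRingEnd ℂ b * a).re = (starRingEnd ℂ a * b).re := by
      intro a b
      conv_rhs => rw [← Complex.conj_re (starRingEnd ℂ a * b)]
      rw [map_mul, Complex.conj_conj, mul_comm]
    have habs : ∀ a b : ℂ, (starRingEnd ℂ a * b).re ≤ ‖a‖ * ‖b‖ := by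
      intro a b
      calc (starRingEnd ℂ a * b).re ≤ ‖starRingEnd ℂ a * b‖ := Complex.re_le_norm _
        _ = ‖a‖ * ‖b‖ := by rw [norm_mul, Complex.norm_conj]
    have hT : 0 ≤ ∑ i, ∑ j, N i j * ((q j / q i) * Complex.normSq (t i)
        - (starRingEnd ℂ (t i) * t j).re) := by
      obtain ⟨F, hFd⟩ : ∃ F : X → X → ℝ, ∀ i j, F i j = N i j
          * ((q j / q i) * Complex.normSq (t i) - (starRingEnd ℂ (t i) * t j).re) :=
        ⟨_, fun i j => rfl⟩
      have hgoal : (∑ i, ∑ j, N i j * ((q j / q i) * Complex.normSq (t i)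
          - (starRingEnd ℂ (t i) * t j).re)) = ∑ i, ∑ j, F i j := by
        exact Finset.sum_congr rfl fun i _ => Finset.sum_congr rfl fun j _ => (hFd i j).symm
      rw [hgoal]
      have h2 : (∑ i, ∑ j, F i j) = ∑ i, ∑ j, F j i := Finset.sum_comm
      have hpair : 0 ≤ ∑ i, ∑ j, (F i j + F j i) := by
        refine Finset.sum_nonneg fun i _ => Finset.sum_nonneg fun j _ => ?_
        rw [hFd i j, hFd j i, hNsymm j i, hRe2 (t i) (t j)]
        have hb : 2 * (‖t i‖ * ‖t j‖)
            ≤ q j / q i * (‖t i‖)^2 + q i / q j * (‖t j‖)^2 :=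
          div_am_gm_aux (hq i) (hq j)
        have habs' := habs (t i) (t j)
        have hsq1 : Complex.normSq (t i) = (‖t i‖)^2 := (Complex.sq_norm _).symm
        have hsq2 : Complex.normSq (t j) = (‖t j‖)^2 := (Complex.sq_norm _).symm
        rw [hsq1, hsq2]
        nlinarith [hN0 i j]
      have hsplit : (∑ i, ∑ j, (F i j + F j i))
          = (∑ i, ∑ j, F i j) + ∑ i, ∑ j, F j i := by
        rw [← Finset.sum_add_distrib]
        exact Finset.sum_congr rfl fun i _ => Finset.sum_add_distrib
      rw [hsplit, ← h2] at hpair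
      linarith
    rw [← hre] at hT
    have hmure : μ.re = (μ - 1).re + 1 := by simp [Complex.sub_re]
    rcases lt_or_eq_of_le hr0 with hrpos | hrzero
    · have : 0 ≤ (μ - 1).re := by
        by_contra hneg
        push_neg at hneg
        have := mul_neg_of_neg_of_pos hneg hrpos
        linarith
      linarith [this]
    · -- r = 0 case
      have hsum0 : ∑ i, g i * Complex.normSq (v i) / q i = 0 := by
        rw [← hrd, ← hrzero]
      have hz : ∀ i, t i = 0 := by
        intro i
        have hterm := (Finset.sum_eq_zero_iff_of_nonneg (fun i _ =>
          div_nonneg (mul_nonneg (hg i) (Complex.normSq_nonneg _)) (hq i).le)).mp hsum0 i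
          (Finset.mem_univ i)
        have hnum : g i * Complex.normSq (v i) = 0 := by
          rcases div_eq_zero_iff.mp hterm with h | h
          · exact h
          · exact absurd h (hq i).ne'
        rcases mul_eq_zero.mp hnum with h | h
        · rw [htd i, h]; simp
        · rw [htd i, Complex.normSq_eq_zero.mp h]; simp
      obtain ⟨i, hvi⟩ := Function.ne_iff.mp hv0
      have h0 := heq i
      rw [Finset.sum_eq_zero (fun j _ => by rw [hz j, mul_zero])] at h0
      have hμ : μ = 1 := by
        rcases mul_eq_zero.mp h0.symm with h | h
        · linear_combination h
        · exact absurd h hvi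
      rw [hμ]
      norm_num
  refine ⟨main, ?_⟩
  by_contra hne
  have hdet : (1 + (C - M) * Γ).det = 0 := by
    by_contra h
    exact hne ((Matrix.isUnit_iff_isUnit_det _).mpr (isUnit_iff_ne_zero.mpr h))
  have hdetC : ((1 + (C - M) * Γ).map (fun x:ℝ => (x:ℂ))).det = 0 := by
    have h := RingHom.map_det Complex.ofRealHom (1 + (C - M) * Γ)
    rw [RingHom.mapMatrix_apply] at h
    rw [show (fun x:ℝ => (x:ℂ)) = ⇑Complex.ofRealHom from rfl, ← h, hdet, map_zero]
  obtain ⟨v, hv0, hv⟩ := (Matrix.exists_mulVec_eq_zero_iff).mpr hdetC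
  have := main 0 ⟨v, hv0, by simpa using hv⟩
  simp at this
  linarith


end RDP
end

section
/- Let X be a nonempty finite set, p a probability vector on X with positive entries, d : X × X → [0,∞), s_D ≥ 0, s_P ≥ 0, and let (g_i)_{i∈X} be arbitrary real numbers. Set A(x,i) := exp(−s_D·d(x,i) − s_P·g_i), Z(x) := Σ_k q(k)A(x,k) for a probability vector q on X with positive entries, and M(i,j) := q(i)·Σ_x p(x)·A(x,i)A(x,j)/Z(x)². If the |X| × |X| matrix with entries exp(−s_D·d(x,y)) is invertible, then the symmetric matrix with entries √(q(i)q(j))·Σ_x p(x)·A(x,i)A(x,j)/Z(x)² (which equals diag(√q)·M·diag(√q)^{−1}) is positive definite; consequently every eigenvalue of M is a positive real number. -/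
namespace RDP
open Matrix

variable {X : Type*}

open Matrix in
private lemma posDef_transpose_mul_self {X : Type*} [Fintype X] [DecidableEq X]
    (B : Matrix X X ℝ) (hB : IsUnit B) : (Bᵀ * B).PosDef := by
  rw [Matrix.posDef_iff_dotProduct_mulVec]
  constructor
  · rw [Matrix.IsHermitian, Matrix.conjTranspose_mul]; simp [Matrix.conjTranspose_eq_transpose_of_trivial]
  · intro x hx
    have hy : B.mulVec x ≠ 0 := by
      have := Matrix.mulVec_injective_iff_isUnit.mpr hB
      intro h; exact hx (this (by simpa using h))
    have : star x ⬝ᵥ (Bᵀ * B).mulVec x = B.mulVec x ⬝ᵥ B.mulVec x := by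
      rw [← Matrix.mulVec_mulVec, dotProduct_mulVec, Matrix.vecMul_transpose]
      simp
    rw [this]
    have := dotProduct_self_eq_zero (v := B.mulVec x)
    have h2 : 0 ≤ B.mulVec x ⬝ᵥ B.mulVec x := Finset.sum_nonneg fun i _ => mul_self_nonneg _
    rcases h2.lt_or_eq with h | h
    · exact h
    · exact absurd (this.mp h.symm) hy

lemma eig_real_pos {X : Type*} [Fintype X] [DecidableEq X] {S : Matrix X X ℝ}
    (hS : S.PosDef) {μ : ℂ} {w : X → ℂ} (hw : w ≠ 0)
    (h : (S.map (fun x : ℝ => (x : ℂ))).mulVec w = μ • w) :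
    μ.im = 0 ∧ 0 < μ.re := by
  classical
  set a : X → ℝ := fun i => (w i).re with ha
  set b : X → ℝ := fun i => (w i).im with hb
  have hsymm : ∀ i j, S i j = S j i := fun i j => by
    have := hS.isHermitian; have := congrFun (congrFun this i) j
    simpa [Matrix.conjTranspose_apply] using this.symm
  set QF : ℂ := ∑ i, (starRingEnd ℂ) (w i) * ((S.map (fun x : ℝ => (x : ℂ))).mulVec w i) with hQF
  have hQF1 : QF = μ * ∑ i, ((Complex.normSq (w i) : ℝ) : ℂ) := by
    rw [hQF, h]
    simp only [Pi.smul_apply, smul_eq_mul, Finset.mul_sum]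
    refine Finset.sum_congr rfl fun i _ => ?_
    have e : (starRingEnd ℂ) (w i) * w i = (Complex.normSq (w i) : ℂ) :=
      (Complex.normSq_eq_conj_mul_self).symm
    linear_combination μ * e
  have hQF2 : QF = ∑ i, ∑ j, (starRingEnd ℂ) (w i) * ((S i j : ℂ) * w j) := by
    rw [hQF]
    refine Finset.sum_congr rfl fun i _ => ?_
    rw [Matrix.mulVec, dotProduct, Finset.mul_sum]
    simp [Matrix.map_apply]
  have hre : QF.re = (∑ i, ∑ j, S i j * (a i * a j) ) + ∑ i, ∑ j, S i j * (b i * b j) := by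
    rw [hQF2, Complex.re_sum]
    rw [← Finset.sum_add_distrib]
    refine Finset.sum_congr rfl fun i _ => ?_
    rw [Complex.re_sum, ← Finset.sum_add_distrib]
    refine Finset.sum_congr rfl fun j _ => ?_
    simp [Complex.mul_re, Complex.mul_im, ha, hb]
    ring
  have him : QF.im = 0 := by
    have : QF.im = ∑ i, ∑ j, S i j * (a i * b j) - ∑ i, ∑ j, S i j * (b i * a j) := by
      rw [hQF2, Complex.im_sum, ← Finset.sum_sub_distrib]
      refine Finset.sum_congr rfl fun i _ => ?_
      rw [Complex.im_sum, ← Finset.sum_sub_distrib]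
      refine Finset.sum_congr rfl fun j _ => ?_
      simp [Complex.mul_re, Complex.mul_im, ha, hb]
      ring
    rw [this, sub_eq_zero]
    rw [Finset.sum_comm]
    refine Finset.sum_congr rfl fun i _ => Finset.sum_congr rfl fun j _ => ?_
    rw [hsymm j i]; ring
  have hquad : ∀ x : X → ℝ, (∑ i, ∑ j, S i j * (x i * x j)) = dotProduct (star x) (S.mulVec x) := by
    intro x
    simp only [dotProduct, Matrix.mulVec, Pi.star_apply, star_trivial, Finset.mul_sum]
    exact Finset.sum_congr rfl fun i _ => Finset.sum_congr rfl fun j _ => by ring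
  have hwne : a ≠ 0 ∨ b ≠ 0 := by
    by_contra hc
    push_neg at hc
    obtain ⟨h1, h2⟩ := hc
    apply hw; funext i
    have e1 : (w i).re = 0 := congrFun h1 i
    have e2 : (w i).im = 0 := congrFun h2 i
    exact Complex.ext e1 e2
  have hpos : 0 < QF.re := by
    rw [hre, hquad, hquad]
    rcases hwne with h1 | h1
    · have := hS.dotProduct_mulVec_pos h1
      have h2 : (0:ℝ) ≤ dotProduct (star b) (S.mulVec b) := by
        rcases eq_or_ne b 0 with hb0 | hb0
        · rw [hb0]; simp
        · exact (hS.dotProduct_mulVec_pos hb0).le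
      linarith
    · have := hS.dotProduct_mulVec_pos h1
      have h2 : (0:ℝ) ≤ dotProduct (star a) (S.mulVec a) := by
        rcases eq_or_ne a 0 with ha0 | ha0
        · rw [ha0]; simp
        · exact (hS.dotProduct_mulVec_pos ha0).le
      linarith
  set n : ℝ := ∑ i, Complex.normSq (w i) with hn
  have hnpos : 0 < n := by
    obtain ⟨i, hi⟩ := Function.ne_iff.mp hw
    refine Finset.sum_pos' (fun j _ => Complex.normSq_nonneg _) ⟨i, Finset.mem_univ i, ?_⟩
    exact Complex.normSq_pos.mpr hi
  have hQFn : QF = μ * (n : ℂ) := by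
    rw [hQF1, hn]; push_cast; ring_nf
  have him2 : μ.im = 0 := by
    have := congrArg Complex.im hQFn
    rw [him] at this
    simp [Complex.mul_im] at this
    rcases this with h | h
    · exact h
    · exact absurd h hnpos.ne'
  have hre2 : 0 < μ.re := by
    have := congrArg Complex.re hQFn
    rw [this] at hpos
    simp [Complex.mul_re, him2] at hpos
    nlinarith [hnpos]
  exact ⟨him2, hre2⟩

/-- If the distortion kernel `[exp(−s_D d(x,y))]` is invertible, the symmetrized version of `M`
is positive definite, so every eigenvalue of `M` is a positive real number. -/
theorem M_eigenvalues_positive [Fintype X] [DecidableEq X] [Nonempty X]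
    (p : X → ℝ) (hp : ∀ x, 0 < p x) (hp1 : ∑ x, p x = 1)
    (d : X → X → ℝ) (hd : ∀ x y, 0 ≤ d x y)
    (sD sP : ℝ) (hsD : 0 ≤ sD) (hsP : 0 ≤ sP)
    (g : X → ℝ)
    (q : X → ℝ) (hq : ∀ i, 0 < q i) (hq1 : ∑ i, q i = 1)
    (A : X → X → ℝ) (hA : ∀ x i, A x i = Real.exp (-(sD * d x i) - sP * g i))
    (Z : X → ℝ) (hZ : ∀ x, Z x = ∑ k, q k * A x k)
    (M : Matrix X X ℝ)
    (hM : ∀ i j, M i j = q i * ∑ x, p x * (A x i * A x j) / Z x ^ 2)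
    (hker : IsUnit (Matrix.of fun x y : X => Real.exp (-(sD * d x y)))) :
    (Matrix.of fun i j : X =>
        Real.sqrt (q i * q j) * ∑ x, p x * (A x i * A x j) / Z x ^ 2).PosDef
    ∧ ∀ μ : ℂ, HasEig (M.map (fun x : ℝ => (x : ℂ))) μ → μ.im = 0 ∧ 0 < μ.re := by
  classical
  have hApos : ∀ x i, 0 < A x i := fun x i => by rw [hA]; exact Real.exp_pos _
  have hZpos : ∀ x, 0 < Z x := fun x => by
    rw [hZ]
    exact Finset.sum_pos (fun k _ => mul_pos (hq k) (hApos x k)) Finset.univ_nonempty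
  set S : Matrix X X ℝ := Matrix.of fun i j : X =>
      Real.sqrt (q i * q j) * ∑ x, p x * (A x i * A x j) / Z x ^ 2 with hSdef
  set B : Matrix X X ℝ :=
      Matrix.of (fun x i : X => Real.sqrt (p x) * A x i * Real.sqrt (q i) / Z x) with hBdef
  have hBS : Bᵀ * B = S := by
    ext i j
    rw [Matrix.mul_apply]
    show (∑ x, B x i * B x j) = Real.sqrt (q i * q j) * ∑ x, p x * (A x i * A x j) / Z x ^ 2
    rw [Finset.mul_sum]
    refine Finset.sum_congr rfl fun x _ => ?_
    have hps : Real.sqrt (p x) * Real.sqrt (p x) = p x := Real.mul_self_sqrt (hp x).le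
    have h1 : B x i * B x j =
        (Real.sqrt (p x) * Real.sqrt (p x)) * (A x i * A x j) *
          (Real.sqrt (q i) * Real.sqrt (q j)) / Z x ^ 2 := by
      show (Real.sqrt (p x) * A x i * Real.sqrt (q i) / Z x) *
          (Real.sqrt (p x) * A x j * Real.sqrt (q j) / Z x) = _
      rw [pow_two]; ring
    rw [h1, hps, ← Real.sqrt_mul (hq i).le]
    ring
  have hBunit : IsUnit B := by
    have hfact : B = (Matrix.diagonal fun x => Real.sqrt (p x) / Z x) *
        (Matrix.of fun x y : X => Real.exp (-(sD * d x y))) *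
        (Matrix.diagonal fun i => Real.exp (-(sP * g i)) * Real.sqrt (q i)) := by
      ext x i
      rw [Matrix.mul_diagonal, Matrix.diagonal_mul]
      show Real.sqrt (p x) * A x i * Real.sqrt (q i) / Z x =
        Real.sqrt (p x) / Z x * Real.exp (-(sD * d x i)) * (Real.exp (-(sP * g i)) * Real.sqrt (q i))
      rw [hA, sub_eq_add_neg, Real.exp_add]
      ring
    have hdiag : ∀ c : X → ℝ, (∀ i, c i ≠ 0) → IsUnit (Matrix.diagonal c) := by
      intro c hc
      rw [Matrix.isUnit_iff_isUnit_det, Matrix.det_diagonal, isUnit_iff_ne_zero]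
      exact Finset.prod_ne_zero_iff.mpr fun i _ => hc i
    rw [hfact]
    exact ((hdiag _ fun x => div_ne_zero (Real.sqrt_ne_zero'.mpr (hp x)) (hZpos x).ne').mul
      hker).mul (hdiag _ fun i => mul_ne_zero (Real.exp_ne_zero _) (Real.sqrt_ne_zero'.mpr (hq i)))
  have hSpd : S.PosDef := hBS ▸ posDef_transpose_mul_self B hBunit
  refine ⟨hSpd, fun μ ⟨v, hv, hveq⟩ => ?_⟩
  -- similarity: √q i * S i j = M i j * √q j
  have hreal : ∀ i j, Real.sqrt (q i) * S i j = M i j * Real.sqrt (q j) := by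
    intro i j
    have hqi : Real.sqrt (q i) * Real.sqrt (q i) = q i := Real.mul_self_sqrt (hq i).le
    simp only [hSdef, Matrix.of_apply, hM i j]
    rw [Real.sqrt_mul (hq i).le]
    linear_combination (Real.sqrt (q j) * ∑ x, p x * (A x i * A x j) / Z x ^ 2) * hqi
  set w : X → ℂ := fun j => ((Real.sqrt (q j) : ℝ) : ℂ)⁻¹ * v j with hwdef
  have hsne : ∀ i : X, ((Real.sqrt (q i) : ℝ) : ℂ) ≠ 0 := fun i => by
    exact_mod_cast Real.sqrt_ne_zero'.mpr (hq i)
  have hw : w ≠ 0 := by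
    obtain ⟨i, hi⟩ := Function.ne_iff.mp hv
    intro hc
    have := congrFun hc i
    simp only [hwdef, Pi.zero_apply] at this
    exact hi ((mul_eq_zero.mp this).resolve_left (inv_ne_zero (hsne i)))
  have hmv : (S.map (fun x : ℝ => (x : ℂ))).mulVec w = μ • w := by
    funext i
    apply mul_left_cancel₀ (hsne i)
    have hstep : ((Real.sqrt (q i) : ℝ) : ℂ) * (S.map (fun x : ℝ => (x : ℂ))).mulVec w i
        = ∑ j, ((M i j : ℝ) : ℂ) * v j := by
      rw [Matrix.mulVec, dotProduct, Finset.mul_sum]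
      refine Finset.sum_congr rfl fun j _ => ?_
      have := hreal i j
      have hc : ((Real.sqrt (q i) : ℝ) : ℂ) * ((S i j : ℝ) : ℂ)
          = ((M i j : ℝ) : ℂ) * ((Real.sqrt (q j) : ℝ) : ℂ) := by exact_mod_cast this
      calc ((Real.sqrt (q i) : ℝ) : ℂ) * ((S.map (fun x : ℝ => (x : ℂ))) i j * w j)
          = (((Real.sqrt (q i) : ℝ) : ℂ) * ((S i j : ℝ) : ℂ)) * w j := by
            rw [Matrix.map_apply]; ring
        _ = (((M i j : ℝ) : ℂ) * ((Real.sqrt (q j) : ℝ) : ℂ)) * w j := by rw [hc]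
        _ = ((M i j : ℝ) : ℂ) * v j := by
            rw [hwdef]
            field_simp [hsne j]
    have hMv : ∑ j, ((M i j : ℝ) : ℂ) * v j = μ * v i := by
      have := congrFun hveq i
      rw [Matrix.mulVec, dotProduct] at this
      simpa [Matrix.map_apply] using this
    rw [hstep, hMv]
    have : ((Real.sqrt (q i) : ℝ) : ℂ) * w i = v i := by
      rw [hwdef]; field_simp [hsne i]
    rw [Pi.smul_apply, smul_eq_mul]
    rw [show ((Real.sqrt (q i):ℝ):ℂ) * (μ * w i) = μ * (((Real.sqrt (q i):ℝ):ℂ) * w i) by ring, this]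
  exact eig_real_pos hSpd hw hmv


end RDP
end

section
/- Let X be a nonempty finite set, p a probability vector on X with positive entries, d : X × X → [0,∞), s_D ≥ 0, s_P ≥ 0, (g_i)_{i∈X} real numbers, and q a probability vector on X with positive entries. Set A(x,i) := exp(−s_D·d(x,i) − s_P·g_i), Z(x) := Σ_k q(k)A(x,k), and M(i,j) := q(i)·Σ_x p(x)·A(x,i)A(x,j)/Z(x)². If Σ_x p(x)A(x,j)/Z(x) = 1 for every j ∈ X, then every complex eigenvalue λ of M satisfies |λ| ≤ 1. -/
namespace RDP

variable {X : Type*}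

/-- Under the fixed-point (first-order optimality) condition `Σ_x p(x)A(x,j)/Z(x) = 1` for all
`j`, every complex eigenvalue `λ` of `M` satisfies `|λ| ≤ 1`. -/
theorem M_eigenvalues_le_one [Fintype X] [Nonempty X]
    (p : X → ℝ) (hp : ∀ x, 0 < p x) (hp1 : ∑ x, p x = 1)
    (d : X → X → ℝ) (hd : ∀ x y, 0 ≤ d x y)
    (sD sP : ℝ) (hsD : 0 ≤ sD) (hsP : 0 ≤ sP)
    (g : X → ℝ)
    (q : X → ℝ) (hq : ∀ i, 0 < q i) (hq1 : ∑ i, q i = 1)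
    (A : X → X → ℝ) (hA : ∀ x i, A x i = Real.exp (-(sD * d x i) - sP * g i))
    (Z : X → ℝ) (hZ : ∀ x, Z x = ∑ k, q k * A x k)
    (M : Matrix X X ℝ)
    (hM : ∀ i j, M i j = q i * ∑ x, p x * (A x i * A x j) / Z x ^ 2)
    (hfix : ∀ j, ∑ x, p x * A x j / Z x = 1) :
    ∀ μ : ℂ, HasEig (M.map (fun x : ℝ => (x : ℂ))) μ → ‖μ‖ ≤ 1 := by
  intro μ hμ
  obtain ⟨v, hv, hev⟩ := hμ
  have hApos : ∀ x i, 0 < A x i := fun x i => by rw [hA]; exact Real.exp_pos _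
  have hZpos : ∀ x, 0 < Z x := fun x => by
    rw [hZ]
    exact Finset.sum_pos (fun k _ => mul_pos (hq k) (hApos x k)) Finset.univ_nonempty
  have hMnn : ∀ i j, 0 ≤ M i j := fun i j => by
    rw [hM]
    exact mul_nonneg (hq i).le (Finset.sum_nonneg fun x _ => div_nonneg
      (mul_nonneg (hp x).le (mul_nonneg (hApos x i).le (hApos x j).le)) (sq_nonneg _))
  have hcol : ∀ j, ∑ i, M i j = 1 := by
    intro j
    calc ∑ i, M i j = ∑ i, ∑ x, (q i * A x i) * (p x * A x j / Z x ^ 2) := by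
          refine Finset.sum_congr rfl fun i _ => ?_
          rw [hM, Finset.mul_sum]
          exact Finset.sum_congr rfl fun x _ => by ring
      _ = ∑ x, (∑ i, q i * A x i) * (p x * A x j / Z x ^ 2) := by
          rw [Finset.sum_comm]; simp_rw [Finset.sum_mul]
      _ = ∑ x, p x * A x j / Z x := by
          refine Finset.sum_congr rfl fun x _ => ?_
          rw [← hZ]
          have := (hZpos x).ne'
          field_simp
      _ = 1 := hfix j
  set S := ∑ i, ‖v i‖ with hS
  have hSpos : 0 < S := by
    obtain ⟨i, hi⟩ := Function.ne_iff.mp hv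
    exact Finset.sum_pos' (fun i _ => norm_nonneg _)
      ⟨i, Finset.mem_univ i, by simpa using hi⟩
  have key : ‖μ‖ * S ≤ S := by
    calc ‖μ‖ * S = ∑ i, ‖μ * v i‖ := by
          rw [hS, Finset.mul_sum]; simp [norm_mul]
      _ = ∑ i, ‖∑ j, (M i j : ℂ) * v j‖ := by
          refine Finset.sum_congr rfl fun i _ => ?_
          have h := congrFun hev i
          simp only [Matrix.mulVec, dotProduct, Matrix.map_apply, Pi.smul_apply,
            smul_eq_mul] at h
          rw [← h]
      _ ≤ ∑ i, ∑ j, M i j * ‖v j‖ := by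
          refine Finset.sum_le_sum fun i _ => ?_
          refine (norm_sum_le _ _).trans (Finset.sum_le_sum fun j _ => ?_)
          rw [norm_mul, Complex.norm_real, Real.norm_of_nonneg (hMnn i j)]
      _ = ∑ j, (∑ i, M i j) * ‖v j‖ := by
          rw [Finset.sum_comm]; simp_rw [Finset.sum_mul]
      _ = S := by simp [hcol, hS]
  have := le_of_mul_le_mul_right (by linarith : ‖μ‖ * S ≤ 1 * S) hSpos
  exact this


end RDP
end

section
/- Let X be a nonempty finite set, p a probability vector on X with positive entries, d : X × X → [0,∞), s_D ≥ 0, s_P ≥ 0, and f : (0,∞) → ℝ convex and differentiable with f(1) = 0; set g(a,b) := f(a/b) − (a/b)·f'(a/b). Let u and v be probability vectors on X with positive entries and define A(x,y) := exp(−s_D·d(x,y) − s_P·g(p(y), v(y))), Z(x) := Σ_y u(y)A(x,y), c(y) := Σ_x p(x)A(x,y)/Z(x), and c_max := max_y c(y). Then for all real D, P and every stochastic matrix Q on X with positive output marginal Qm satisfying Σ_{x,y} p(x)Q(y|x)d(x,y) ≤ D and D_f(p||Qm) ≤ P, one has I(p,Q) ≥ −s_D·D − s_P·P − Σ_x p(x)·log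 Z(x) + s_P·Σ_y p(y)·f'(p(y)/v(y)) − log c_max. In particular, the rate-distortion-perception function satisfies R(D,P) ≥ −s_D·D − s_P·P − Σ_x p(x)·log Z(x) + s_P·Σ_y p(y)·f'(p(y)/v(y)) − log c_max. -/
namespace RDP

variable {X : Type*}


private lemma support_line {f f' : ℝ → ℝ} (hfconv : ConvexOn ℝ (Set.Ioi 0) f)
    (hf' : ∀ x ∈ Set.Ioi (0:ℝ), HasDerivAt f (f' x) x) {t a : ℝ} (ht : 0 < t) (ha : 0 < a) :
    f t + f' t * (a - t) ≤ f a := by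
  rcases lt_trichotomy t a with h | rfl | h
  · have hs := hfconv.le_slope_of_hasDerivAt (Set.mem_Ioi.2 ht) (Set.mem_Ioi.2 ha) h
      (hf' t (Set.mem_Ioi.2 ht))
    rw [slope_def_field, le_div_iff₀ (by linarith)] at hs
    linarith
  · simp
  · have hs := hfconv.slope_le_of_hasDerivAt (Set.mem_Ioi.2 ha) (Set.mem_Ioi.2 ht) h
      (hf' t (Set.mem_Ioi.2 ht))
    rw [slope_def_field, div_le_iff₀ (by linarith)] at hs
    have : f' t * (a - t) = -(f' t * (t - a)) := by ring
    linarith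

private lemma sum_log_ge {X : Type*} [Fintype X] [Nonempty X] (q m : X → ℝ)
    (hq0 : ∀ y, 0 ≤ q y) (hq1 : ∑ y, q y = 1) (hm : ∀ y, 0 < m y) :
    -Real.log (∑ y, m y) ≤ ∑ y, q y * Real.log (q y / m y) := by
  set S := ∑ y, m y with hS
  have hSpos : 0 < S := Finset.sum_pos (fun y _ => hm y) Finset.univ_nonempty
  have key : ∀ y, q y - m y / S ≤ q y * Real.log (q y / m y) + q y * Real.log S := by
    intro y
    rcases eq_or_lt_of_le (hq0 y) with h | h
    · have : 0 ≤ m y / S := div_nonneg (hm y).le hSpos.le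
      simp [← h]; linarith
    · have hlog : Real.log (m y / (q y * S)) ≤ m y / (q y * S) - 1 :=
        Real.log_le_sub_one_of_pos (div_pos (hm y) (mul_pos h hSpos))
      have hql : Real.log (m y / (q y * S))
          = Real.log (m y) - (Real.log (q y) + Real.log S) := by
        rw [Real.log_div (ne_of_gt (hm y)) (by positivity),
          Real.log_mul (ne_of_gt h) (ne_of_gt hSpos)]
      have h2 : Real.log (q y / m y) = Real.log (q y) - Real.log (m y) :=
        Real.log_div (ne_of_gt h) (ne_of_gt (hm y))
      rw [hql] at hlog
      have h4 := mul_le_mul_of_nonneg_left hlog h.le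
      have h5 : q y * (m y / (q y * S) - 1) = m y / S - q y := by field_simp
      rw [h5] at h4
      rw [h2]
      nlinarith [h4]
  have hsum := Finset.sum_le_sum (fun y (_ : y ∈ Finset.univ) => key y)
  rw [Finset.sum_sub_distrib, Finset.sum_add_distrib, ← Finset.sum_div, ← hS,
    ← Finset.sum_mul, hq1, div_self (ne_of_gt hSpos), one_mul] at hsum
  linarith

private lemma sum_log_le {X : Type*} [Fintype X] [Nonempty X] (p w : X → ℝ)
    (hp : ∀ x, 0 < p x) (hp1 : ∑ x, p x = 1) (hw : ∀ x, 0 < w x) :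
    ∑ x, p x * Real.log (w x) ≤ Real.log (∑ x, p x * w x) := by
  set W := ∑ x, p x * w x with hW
  have hWpos : 0 < W := Finset.sum_pos (fun x _ => mul_pos (hp x) (hw x)) Finset.univ_nonempty
  have key : ∀ x, p x * Real.log (w x) ≤ p x * w x / W - p x + p x * Real.log W := by
    intro x
    have hlog : Real.log (w x / W) ≤ w x / W - 1 := Real.log_le_sub_one_of_pos (div_pos (hw x) hWpos)
    rw [Real.log_div (ne_of_gt (hw x)) (ne_of_gt hWpos)] at hlog
    have h4 := mul_le_mul_of_nonneg_left hlog (hp x).le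
    have h5 : p x * (w x / W - 1) = p x * w x / W - p x := by field_simp
    rw [h5] at h4
    nlinarith [h4]
  have hsum := Finset.sum_le_sum (fun x (_ : x ∈ Finset.univ) => key x)
  rw [Finset.sum_add_distrib, Finset.sum_sub_distrib, ← Finset.sum_div, ← hW,
    ← Finset.sum_mul, hp1, div_self (ne_of_gt hWpos), one_mul] at hsum
  linarith

/-- Lower bound on the rate-distortion-perception function: every feasible `Q` satisfies
`I(p,Q) ≥ −s_D D − s_P P − Σ_x p(x) log Z(x) + s_P Σ_y p(y) f'(p(y)/v(y)) − log c_max`,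
and hence so does `R(D,P)`. -/
theorem RDPF_lower_bound [Fintype X] [Nonempty X]
    (p : X → ℝ) (hp : ∀ x, 0 < p x) (hp1 : ∑ x, p x = 1)
    (d : X → X → ℝ) (hd : ∀ x y, 0 ≤ d x y)
    (sD sP : ℝ) (hsD : 0 ≤ sD) (hsP : 0 ≤ sP)
    (f f' : ℝ → ℝ) (hfconv : ConvexOn ℝ (Set.Ioi 0) f)
    (hf' : ∀ x ∈ Set.Ioi (0 : ℝ), HasDerivAt f (f' x) x) (hf1 : f 1 = 0)
    (u v : X → ℝ) (hu : ∀ i, 0 < u i) (hu1 : ∑ i, u i = 1)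
    (hv : ∀ i, 0 < v i) (hv1 : ∑ i, v i = 1)
    (A : X → X → ℝ)
    (hA : ∀ x y, A x y = Real.exp (-(sD * d x y) - sP *
        (f (p y / v y) - p y / v y * f' (p y / v y))))
    (Z : X → ℝ) (hZ : ∀ x, Z x = ∑ y, u y * A x y)
    (c : X → ℝ) (hcdef : ∀ y, c y = ∑ x, p x * A x y / Z x)
    (cmax : ℝ) (hcmax : IsGreatest (Set.range c) cmax) :
    (∀ D P : ℝ, ∀ Q : X → X → ℝ, IsStochastic Q → (∀ y, 0 < marg p Q y) →
        distortion p d Q ≤ D → fDiv f p (marg p Q) ≤ P →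
        -(sD * D) - sP * P - (∑ x, p x * Real.log (Z x))
            + sP * ∑ y, p y * f' (p y / v y) - Real.log cmax ≤ mutInfo p Q)
    ∧ ∀ D P : ℝ,
        ((-(sD * D) - sP * P - (∑ x, p x * Real.log (Z x))
            + sP * ∑ y, p y * f' (p y / v y) - Real.log cmax : ℝ) : EReal)
          ≤ RDPF p d f D P := by
  have main : ∀ D P : ℝ, ∀ Q : X → X → ℝ, IsStochastic Q → (∀ y, 0 < marg p Q y) →
      distortion p d Q ≤ D → fDiv f p (marg p Q) ≤ P →
      -(sD * D) - sP * P - (∑ x, p x * Real.log (Z x))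
          + sP * ∑ y, p y * f' (p y / v y) - Real.log cmax ≤ mutInfo p Q := by
    intro D P Q hQst hm hDle hPle
    obtain ⟨hQ0, hQ1⟩ := hQst
    set g : X → ℝ := fun y => f (p y / v y) - p y / v y * f' (p y / v y) with hg
    have hApos : ∀ x y, 0 < A x y := fun x y => by rw [hA]; exact Real.exp_pos _
    have hlogA : ∀ x y, Real.log (A x y) = -(sD * d x y) - sP * g y := by
      intro x y; rw [hA, Real.log_exp]
    have hZpos : ∀ x, 0 < Z x := by
      intro x; rw [hZ]
      exact Finset.sum_pos (fun y _ => mul_pos (hu y) (hApos x y)) Finset.univ_nonempty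
    have hq1 : ∑ y, marg p Q y = 1 := by
      simp only [marg]
      rw [Finset.sum_comm]
      simp only [← Finset.mul_sum]
      simp only [hQ1, mul_one, hp1]
    -- Step A: convexity lower bound on the f-divergence
    have hfd : (∑ y, marg p Q y * g y) + ∑ y, p y * f' (p y / v y)
        ≤ fDiv f p (marg p Q) := by
      rw [← Finset.sum_add_distrib]
      apply Finset.sum_le_sum
      intro y _
      have htpos : 0 < p y / v y := div_pos (hp y) (hv y)
      have hapos : 0 < p y / marg p Q y := div_pos (hp y) (hm y)
      have hsupp := support_line hfconv hf' htpos hapos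
      have h0 := mul_le_mul_of_nonneg_left hsupp (hm y).le
      have hid : marg p Q y * (f (p y / v y) + f' (p y / v y) * (p y / marg p Q y - p y / v y))
          = marg p Q y * g y + p y * f' (p y / v y) := by
        have hne : marg p Q y ≠ 0 := (hm y).ne'
        have hvne : v y ≠ 0 := (hv y).ne'
        rw [hg]
        field_simp
        ring
      rw [hid] at h0
      exact h0
    -- Step B: per-row log-sum inequality
    set S : X → ℝ := fun x => ∑ y, marg p Q y * A x y with hSdef
    have hSpos : ∀ x, 0 < S x := fun x =>
      Finset.sum_pos (fun y _ => mul_pos (hm y) (hApos x y)) Finset.univ_nonempty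
    have hrow : ∀ x, -Real.log (S x)
        ≤ ∑ y, Q x y * Real.log (Q x y / (marg p Q y * A x y)) := by
      intro x
      exact sum_log_ge (Q x) (fun y => marg p Q y * A x y) (hQ0 x) (hQ1 x)
        (fun y => mul_pos (hm y) (hApos x y))
    have hterm : ∀ x y, p x * (Q x y * Real.log (Q x y / (marg p Q y * A x y)))
        = p x * Q x y * Real.log (Q x y / marg p Q y)
          + p x * Q x y * d x y * sD + p x * Q x y * (sP * g y) := by
      intro x y
      rcases eq_or_lt_of_le (hQ0 x y) with h | h
      · simp [← h]
      · have h1 : Real.log (Q x y / (marg p Q y * A x y))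
            = Real.log (Q x y / marg p Q y) - Real.log (A x y) := by
          rw [Real.log_div (ne_of_gt h) (ne_of_gt (mul_pos (hm y) (hApos x y))),
            Real.log_div (ne_of_gt h) (ne_of_gt (hm y)),
            Real.log_mul (ne_of_gt (hm y)) (ne_of_gt (hApos x y))]
          ring
        rw [h1, hlogA]
        ring
    have hkey : mutInfo p Q + sD * distortion p d Q + sP * ∑ y, marg p Q y * g y
        = ∑ x, p x * ∑ y, Q x y * Real.log (Q x y / (marg p Q y * A x y)) := by
      simp only [Finset.mul_sum]
      rw [Finset.sum_congr rfl (fun x _ => Finset.sum_congr rfl (fun y _ => hterm x y))]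
      simp only [Finset.sum_add_distrib]
      have e1 : ∑ x, ∑ y, p x * Q x y * d x y * sD = sD * distortion p d Q := by
        simp only [distortion, Finset.mul_sum]
        exact Finset.sum_congr rfl fun x _ => Finset.sum_congr rfl fun y _ => by ring
      have e2 : ∑ x, ∑ y, p x * Q x y * (sP * g y) = sP * ∑ y, marg p Q y * g y := by
        calc ∑ x, ∑ y, p x * Q x y * (sP * g y)
            = ∑ y, ∑ x, p x * Q x y * (sP * g y) := Finset.sum_comm
          _ = ∑ y, sP * (marg p Q y * g y) := by
              refine Finset.sum_congr rfl fun y _ => ?_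
              simp only [marg, Finset.sum_mul, Finset.mul_sum]
              exact Finset.sum_congr rfl fun x _ => by ring
          _ = sP * ∑ y, marg p Q y * g y := (Finset.mul_sum _ _ _).symm
      rw [e1, e2]
      simp only [mutInfo]
      rw [← Finset.mul_sum]
    have hB : ∑ x, p x * (-Real.log (S x))
        ≤ mutInfo p Q + sD * distortion p d Q + sP * ∑ y, marg p Q y * g y := by
      rw [hkey]
      exact Finset.sum_le_sum fun x _ => mul_le_mul_of_nonneg_left (hrow x) (hp x).le
    -- Step C: Jensen to bring in cmax
    have hcpos : ∀ y, 0 < c y := by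
      intro y; rw [hcdef]
      exact Finset.sum_pos (fun x _ => div_pos (mul_pos (hp x) (hApos x y)) (hZpos x))
        Finset.univ_nonempty
    have hcmaxpos : 0 < cmax := by
      obtain ⟨y0⟩ := (inferInstance : Nonempty X)
      exact lt_of_lt_of_le (hcpos y0) (hcmax.2 ⟨y0, rfl⟩)
    set w : X → ℝ := fun x => S x / Z x with hwdef
    have hwpos : ∀ x, 0 < w x := fun x => div_pos (hSpos x) (hZpos x)
    have hlogS : ∀ x, Real.log (S x) = Real.log (Z x) + Real.log (w x) := by
      intro x
      rw [hwdef]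
      simp only
      rw [Real.log_div (ne_of_gt (hSpos x)) (ne_of_gt (hZpos x))]
      ring
    have hpw : ∑ x, p x * w x = ∑ y, marg p Q y * c y := by
      have hx : ∀ x, p x * w x = ∑ y, marg p Q y * (p x * A x y / Z x) := by
        intro x
        rw [hwdef]
        simp only
        rw [hSdef]
        simp only
        rw [div_eq_mul_inv, Finset.sum_mul, Finset.mul_sum]
        exact Finset.sum_congr rfl fun y _ => by ring
      rw [Finset.sum_congr rfl fun x _ => hx x, Finset.sum_comm]
      refine Finset.sum_congr rfl fun y _ => ?_
      rw [hcdef, Finset.mul_sum]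
    have hpwle : ∑ x, p x * w x ≤ cmax := by
      rw [hpw]
      calc ∑ y, marg p Q y * c y ≤ ∑ y, marg p Q y * cmax :=
            Finset.sum_le_sum fun y _ => mul_le_mul_of_nonneg_left (hcmax.2 ⟨y, rfl⟩) (hm y).le
        _ = cmax := by rw [← Finset.sum_mul, hq1, one_mul]
    have hpwpos : 0 < ∑ x, p x * w x :=
      Finset.sum_pos (fun x _ => mul_pos (hp x) (hwpos x)) Finset.univ_nonempty
    have hC : ∑ x, p x * Real.log (S x)
        ≤ (∑ x, p x * Real.log (Z x)) + Real.log cmax := by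
      have h1 : ∑ x, p x * Real.log (S x)
          = (∑ x, p x * Real.log (Z x)) + ∑ x, p x * Real.log (w x) := by
        rw [← Finset.sum_add_distrib]
        exact Finset.sum_congr rfl fun x _ => by rw [hlogS x]; ring
      rw [h1]
      have h2 := sum_log_le p w hp hp1 hwpos
      have h3 := Real.log_le_log hpwpos hpwle
      linarith
    -- assemble
    have hnegsum : ∑ x, p x * (-Real.log (S x)) = -∑ x, p x * Real.log (S x) := by
      rw [← Finset.sum_neg_distrib]
      exact Finset.sum_congr rfl fun x _ => by ring
    have hDmul : sD * distortion p d Q ≤ sD * D := mul_le_mul_of_nonneg_left hDle hsD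
    have hPmul := mul_le_mul_of_nonneg_left hfd hsP
    rw [mul_add] at hPmul
    have hPmul2 : sP * fDiv f p (marg p Q) ≤ sP * P := mul_le_mul_of_nonneg_left hPle hsP
    rw [hnegsum] at hB
    linarith
  refine ⟨main, ?_⟩
  intro D P
  refine le_sInf ?_
  rintro r ⟨Q, hQs, hQm, hQd, hQf, rfl⟩
  exact_mod_cast main D P Q hQs hQm hQd hQf


end RDP
end

section
/- Let X be a nonempty finite set and p a probability vector on X with positive entries. Let Q be a stochastic matrix on X with output marginal Qm, let a : X × X → (0,∞) be a positive function, and let λ : X → (0,∞) satisfy Σ_x p(x)·λ(x)·a(x,y) ≤ 1 for every y ∈ X. Then I(p,Q) ≥ Σ_x p(x)·log λ(x) + Σ_{x,y} p(x)Q(y|x)·log a(x,y). -/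
namespace RDP

variable {X : Type*}

/-- Core inequality for the stopping criterion: if `Σ_x p(x)λ(x)a(x,y) ≤ 1` for every `y`, then
`I(p,Q) ≥ Σ_x p(x) log λ(x) + Σ_{x,y} p(x)Q(y|x) log a(x,y)`. -/
theorem mutInfo_lower_bound [Fintype X] [Nonempty X]
    (p : X → ℝ) (hp : ∀ x, 0 < p x) (hp1 : ∑ x, p x = 1)
    (Q : X → X → ℝ) (hQ : IsStochastic Q)
    (a : X → X → ℝ) (ha : ∀ x y, 0 < a x y)
    (lam : X → ℝ) (hlam : ∀ x, 0 < lam x)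
    (hineq : ∀ y, ∑ x, p x * lam x * a x y ≤ 1) :
    ∑ x, p x * Real.log (lam x) + ∑ x, ∑ y, p x * Q x y * Real.log (a x y)
      ≤ mutInfo p Q := by
  classical
  have hQm0 : ∀ y, 0 ≤ marg p Q y := fun y =>
    Finset.sum_nonneg fun x _ => mul_nonneg (hp x).le (hQ.1 x y)
  -- termwise key inequality
  have key : ∀ x y,
      p x * Q x y * Real.log (lam x) + p x * Q x y * Real.log (a x y)
        - p x * Q x y * Real.log (Q x y / marg p Q y)
      ≤ p x * lam x * a x y * marg p Q y - p x * Q x y := by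
    intro x y
    rcases eq_or_lt_of_le (hQ.1 x y) with h0 | hpos
    · rw [← h0]
      have : 0 ≤ p x * lam x * a x y * marg p Q y :=
        mul_nonneg (mul_pos (mul_pos (hp x) (hlam x)) (ha x y)).le (hQm0 y)
      simpa using this
    · have hQmy : 0 < marg p Q y :=
        lt_of_lt_of_le (mul_pos (hp x) hpos)
          (Finset.single_le_sum (f := fun x => p x * Q x y)
            (fun x _ => mul_nonneg (hp x).le (hQ.1 x y)) (Finset.mem_univ x))
      have ht : (0:ℝ) < lam x * a x y * marg p Q y / Q x y :=
        div_pos (mul_pos (mul_pos (hlam x) (ha x y)) hQmy) hpos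
      have hlog := Real.log_le_sub_one_of_pos ht
      have e1 : Real.log (lam x) + Real.log (a x y) - Real.log (Q x y / marg p Q y)
          = Real.log (lam x * a x y * marg p Q y / Q x y) := by
        rw [Real.log_div (mul_pos (mul_pos (hlam x) (ha x y)) hQmy).ne' hpos.ne',
          Real.log_mul (mul_pos (hlam x) (ha x y)).ne' hQmy.ne',
          Real.log_mul (hlam x).ne' (ha x y).ne', Real.log_div hpos.ne' hQmy.ne']
        ring
      have hmul : p x * Q x y * Real.log (lam x * a x y * marg p Q y / Q x y)
          ≤ p x * Q x y * (lam x * a x y * marg p Q y / Q x y - 1) :=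
        mul_le_mul_of_nonneg_left hlog (mul_pos (hp x) hpos).le
      have e2 : p x * Q x y * (lam x * a x y * marg p Q y / Q x y - 1)
          = p x * lam x * a x y * marg p Q y - p x * Q x y := by
        field_simp
      calc p x * Q x y * Real.log (lam x) + p x * Q x y * Real.log (a x y)
            - p x * Q x y * Real.log (Q x y / marg p Q y)
          = p x * Q x y * Real.log (lam x * a x y * marg p Q y / Q x y) := by
            rw [← e1]; ring
        _ ≤ p x * Q x y * (lam x * a x y * marg p Q y / Q x y - 1) := hmul
        _ = _ := e2
  -- rewrite the first sum as a double sum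
  have hA : ∑ x, p x * Real.log (lam x)
      = ∑ x, ∑ y, p x * Q x y * Real.log (lam x) := by
    refine Finset.sum_congr rfl fun x _ => ?_
    rw [show (∑ y, p x * Q x y * Real.log (lam x))
        = (p x * Real.log (lam x)) * ∑ y, Q x y from by
      rw [Finset.mul_sum]; exact Finset.sum_congr rfl fun y _ => by ring,
      hQ.2 x, mul_one]
  have hsumQm : ∑ y, marg p Q y = 1 := by
    unfold marg
    rw [Finset.sum_comm]
    simp_rw [← Finset.mul_sum]
    simp_rw [hQ.2]
    simpa using hp1
  have hRHS : ∑ x, ∑ y, (p x * lam x * a x y * marg p Q y - p x * Q x y) ≤ 0 := by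
    have h1 : ∑ x, ∑ y, p x * lam x * a x y * marg p Q y ≤ 1 := by
      rw [Finset.sum_comm]
      calc ∑ y, ∑ x, p x * lam x * a x y * marg p Q y
          = ∑ y, (∑ x, p x * lam x * a x y) * marg p Q y := by
            refine Finset.sum_congr rfl fun y _ => ?_
            rw [Finset.sum_mul]
        _ ≤ ∑ y, 1 * marg p Q y := by
            refine Finset.sum_le_sum fun y _ => ?_
            exact mul_le_mul_of_nonneg_right (hineq y) (hQm0 y)
        _ = 1 := by simpa using hsumQm
    have h2 : ∑ x, ∑ y, p x * Q x y = 1 := by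
      calc ∑ x, ∑ y, p x * Q x y = ∑ x, p x * ∑ y, Q x y := by
            simp_rw [Finset.mul_sum]
        _ = 1 := by simp_rw [hQ.2]; simpa using hp1
    simp only [Finset.sum_sub_distrib]
    linarith
  have hsum := Finset.sum_le_sum (s := (Finset.univ : Finset X))
    (fun x _ => Finset.sum_le_sum (s := (Finset.univ : Finset X))
      (fun y _ => key x y))
  simp only [Finset.sum_sub_distrib, Finset.sum_add_distrib] at hsum
  simp only [Finset.sum_sub_distrib] at hRHS
  unfold mutInfo
  rw [hA]
  linarith

end RDP
end

section
/- Let X be a nonempty finite set and let p, q be probability vectors on X with q(x) > 0 for every x. Then for every integer n ≥ 1, | Σ_x q(x)·f_n(p(x)/q(x)) − Σ_x |p(x) − q(x)| | ≤ 2/(n·π), where f_n(x) := (2/π)·(x−1)·arctan(n(x−1)). In particular, the f-divergences generated by f_n converge to Σ_x |p(x) − q(x)| uniformly over all such pairs (p,q) as n → ∞. -/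
open Real

lemma arctan_le_self' {u : ℝ} (hu : 0 ≤ u) : Real.arctan u ≤ u := by
  have h0 : 0 ≤ Real.arctan u := by
    simpa using Real.arctan_strictMono.monotone hu
  calc Real.arctan u ≤ Real.tan (Real.arctan u) :=
        Real.le_tan h0 (Real.arctan_lt_pi_div_two u)
    _ = u := Real.tan_arctan u

lemma key_bound (qx t : ℝ) (hqx : 0 < qx) (n : ℝ) (hn : 1 ≤ n) :
    abs (2 / Real.pi * t * Real.arctan (n * t / qx) - |t|) ≤ 2 / (n * Real.pi) * qx := by
  have hpi := Real.pi_pos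
  have hn0 : 0 < n := by linarith
  rcases eq_or_ne t 0 with ht | ht
  · simp [ht]
    positivity
  · have hs : 0 < |t| := abs_pos.mpr ht
    have hodd : t * Real.arctan (n * t / qx) = |t| * Real.arctan (n * |t| / qx) := by
      rcases lt_or_gt_of_ne ht with h | h
      · rw [abs_of_neg h]
        have : n * -t / qx = -(n * t / qx) := by ring
        rw [this, Real.arctan_neg]; ring
      · rw [abs_of_pos h]
    set u := n * |t| / qx with hu
    have hu0 : 0 < u := by positivity
    have h1 : Real.pi / 2 - Real.arctan u = Real.arctan u⁻¹ :=
      (Real.arctan_inv_of_pos hu0).symm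
    have h2 : Real.arctan u⁻¹ ≤ u⁻¹ := arctan_le_self' (le_of_lt (inv_pos.mpr hu0))
    have h3 : 0 ≤ Real.pi / 2 - Real.arctan u :=
      le_of_lt (sub_pos.mpr (Real.arctan_lt_pi_div_two u))
    have hexpr : 2 / Real.pi * t * Real.arctan (n * t / qx) - |t|
        = -(|t| * (2 / Real.pi) * (Real.pi / 2 - Real.arctan u)) := by
      rw [mul_assoc, hodd]
      field_simp
      ring
    rw [hexpr, abs_neg, abs_of_nonneg (by positivity)]
    have h4 : |t| * (2 / Real.pi) * (Real.pi / 2 - Real.arctan u)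
        ≤ |t| * (2 / Real.pi) * u⁻¹ := by
      apply mul_le_mul_of_nonneg_left (h1 ▸ h2) (by positivity)
    have h5 : |t| * (2 / Real.pi) * u⁻¹ = 2 / (n * Real.pi) * qx := by
      rw [hu]
      field_simp
    linarith

/-- The f-divergences generated by `f_n(x) = (2/π)(x−1) arctan(n(x−1))` are within `2/(nπ)` of
the total-variation type divergence `Σ_x |p(x) − q(x)|`, uniformly over all pairs `(p,q)`. -/
theorem fdiv_approximant_close_to_tv {X : Type*} [Fintype X] [Nonempty X]
    (p q : X → ℝ) (hp0 : ∀ x, 0 ≤ p x) (hp1 : ∑ x, p x = 1)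
    (hq : ∀ x, 0 < q x) (hq1 : ∑ x, q x = 1) :
    ∀ n : ℕ, 1 ≤ n →
      abs ((∑ x, q x * (2 / Real.pi * (p x / q x - 1) * Real.arctan (n * (p x / q x - 1))))
          - ∑ x, |p x - q x|)
        ≤ 2 / (n * Real.pi) := by
  intro n hn
  have hn' : (1 : ℝ) ≤ n := by exact_mod_cast hn
  have hpi := Real.pi_pos
  rw [← Finset.sum_sub_distrib]
  calc abs (∑ x, (q x * (2 / Real.pi * (p x / q x - 1) * Real.arctan (n * (p x / q x - 1)))
          - |p x - q x|))
      ≤ ∑ x, abs (q x * (2 / Real.pi * (p x / q x - 1) * Real.arctan (n * (p x / q x - 1)))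
          - |p x - q x|) := Finset.abs_sum_le_sum_abs _ _
    _ ≤ ∑ x, 2 / (n * Real.pi) * q x := by
        apply Finset.sum_le_sum
        intro x _
        have hqx := hq x
        have harg : n * (p x / q x - 1) = n * (p x - q x) / q x := by
          field_simp
        have hterm : q x * (2 / Real.pi * (p x / q x - 1) * Real.arctan (n * (p x / q x - 1)))
            = 2 / Real.pi * (p x - q x) * Real.arctan (n * (p x - q x) / q x) := by
          rw [harg]
          field_simp
        rw [hterm]
        exact key_bound (q x) (p x - q x) hqx n hn'
    _ = 2 / (n * Real.pi) := by rw [← Finset.mul_sum, hq1, mul_one]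
end

section
/- Let X be a nonempty finite set, f : (0,∞) → ℝ convex and differentiable, and let p, q, r be probability vectors on X with all entries positive. Then Σ_i r(i)·f(p(i)/r(i)) ≥ Σ_i q(i)·f(p(i)/q(i)) + Σ_i (r(i) − q(i))·( f(p(i)/q(i)) − (p(i)/q(i))·f'(p(i)/q(i)) ). That is, the map q ↦ D_f(p||q) on positive probability vectors dominates its first-order Taylor expansion at any point q, the partial derivative of D_f(p||·) at q in coordinate i being g(p(i), q(i)) = f(p(i)/q(i)) − (p(i)/q(i))·f'(p(i)/q(i)). -/
lemma tangent_le {f f' : ℝ → ℝ} (hfconv : ConvexOn ℝ (Set.Ioi 0) f)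
    (hf' : ∀ x ∈ Set.Ioi (0 : ℝ), HasDerivAt f (f' x) x)
    {a b : ℝ} (ha : a ∈ Set.Ioi (0:ℝ)) (hb : b ∈ Set.Ioi (0:ℝ)) :
    f a + f' a * (b - a) ≤ f b := by
  rcases lt_trichotomy a b with h | h | h
  · have hs := hfconv.le_slope_of_hasDerivAt ha hb h (hf' a ha)
    rw [slope_def_field] at hs
    have hba : 0 < b - a := by linarith
    have := (le_div_iff₀ hba).mp hs
    linarith
  · simp [h]
  · have hs := hfconv.slope_le_of_hasDerivAt hb ha h (hf' a ha)
    rw [slope_def_field] at hs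
    have hba : 0 < a - b := by linarith
    have := (div_le_iff₀ hba).mp hs
    nlinarith

/-- First-order convexity inequality for f-divergences: `D_f(p‖r)` dominates the first-order
Taylor expansion of `q ↦ D_f(p‖q)` at `q`, whose partial derivative in coordinate `i` is
`g(p(i),q(i)) = f(p(i)/q(i)) − (p(i)/q(i)) f'(p(i)/q(i))`. -/
theorem fdiv_ge_taylor_expansion {X : Type*} [Fintype X] [Nonempty X]
    (f f' : ℝ → ℝ) (hfconv : ConvexOn ℝ (Set.Ioi 0) f)
    (hf' : ∀ x ∈ Set.Ioi (0 : ℝ), HasDerivAt f (f' x) x)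
    (p q r : X → ℝ) (hp : ∀ i, 0 < p i) (hp1 : ∑ i, p i = 1)
    (hq : ∀ i, 0 < q i) (hq1 : ∑ i, q i = 1)
    (hr : ∀ i, 0 < r i) (hr1 : ∑ i, r i = 1) :
    ∑ i, q i * f (p i / q i)
        + ∑ i, (r i - q i) * (f (p i / q i) - p i / q i * f' (p i / q i))
      ≤ ∑ i, r i * f (p i / r i) := by
  rw [← Finset.sum_add_distrib]
  apply Finset.sum_le_sum
  intro i _
  have ha : p i / q i ∈ Set.Ioi (0:ℝ) := div_pos (hp i) (hq i)
  have hb : p i / r i ∈ Set.Ioi (0:ℝ) := div_pos (hp i) (hr i)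
  have key := tangent_le hfconv hf' ha hb
  have hri := hr i
  have hqi := hq i
  have h2 := mul_le_mul_of_nonneg_left key (le_of_lt hri)
  have e1 : r i * (p i / r i) = p i := by field_simp
  have e2 : q i * (p i / q i) = p i := by field_simp
  have e3 : q i * f (p i / q i) + (r i - q i) * (f (p i / q i) - p i / q i * f' (p i / q i))
      = r i * (f (p i / q i) + f' (p i / q i) * (p i / r i - p i / q i)) := by
    linear_combination f' (p i / q i) * e2 - f' (p i / q i) * e1
  rw [e3]; exact h2
end

section
/- Let X be a nonempty finite set, p a probability vector on X with positive entries, d : X × X → [0,∞), s_D ≥ 0, s_P ≥ 0, (g_i)_{i∈X} real numbers, and q a probability vector on X with positive entries. Set A(x,i) := exp(−s_D·d(x,i) − s_P·g_i), Z(x) := Σ_k q(k)A(x,k), and M(i,j) := q(i)·Σ_x p(x)·A(x,i)A(x,j)/Z(x)². Assume that (a) the |X| × |X| matrix with entries exp(−s_D·d(x,y)) is invertible, and (b) Σ_x p(x)A(x,j)/Z(x) = 1 for every j ∈ X. Then every eigenvalue θ of the matrix I − M is real and satisfies 0 ≤ θ < 1. -/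
namespace RDP

variable {X : Type*}

/-- At an optimal reconstruction distribution (fixed-point condition (b)) and with a full-rank
distortion kernel (assumption (a)), every eigenvalue `θ` of `I − M` is real and satisfies
`0 ≤ θ < 1`. -/
theorem one_sub_M_eigenvalues [Fintype X] [DecidableEq X] [Nonempty X]
    (p : X → ℝ) (hp : ∀ x, 0 < p x) (hp1 : ∑ x, p x = 1)
    (d : X → X → ℝ) (hd : ∀ x y, 0 ≤ d x y)
    (sD sP : ℝ) (hsD : 0 ≤ sD) (hsP : 0 ≤ sP)
    (g : X → ℝ)
    (q : X → ℝ) (hq : ∀ i, 0 < q i) (hq1 : ∑ i, q i = 1)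
    (A : X → X → ℝ) (hA : ∀ x i, A x i = Real.exp (-(sD * d x i) - sP * g i))
    (Z : X → ℝ) (hZ : ∀ x, Z x = ∑ k, q k * A x k)
    (M : Matrix X X ℝ)
    (hM : ∀ i j, M i j = q i * ∑ x, p x * (A x i * A x j) / Z x ^ 2)
    (hker : IsUnit (Matrix.of fun x y : X => Real.exp (-(sD * d x y))))
    (hfix : ∀ j, ∑ x, p x * A x j / Z x = 1) :
    ∀ μ : ℂ, HasEig ((1 - M).map (fun x : ℝ => (x : ℂ))) μ →
      μ.im = 0 ∧ 0 ≤ μ.re ∧ μ.re < 1 := by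
  intro μ hEig
  obtain ⟨v, hv, hEigv⟩ := hEig
  set c : ℝ → ℂ := fun x => (x : ℂ) with hc
  have hApos : ∀ x i, 0 < A x i := fun x i => by rw [hA]; exact Real.exp_pos _
  have hZpos : ∀ x, 0 < Z x := by
    intro x
    rw [hZ]
    exact Finset.sum_pos (fun k _ => mul_pos (hq k) (hApos x k)) Finset.univ_nonempty
  have hmap : (1 - M).map c = 1 - M.map c := by
    ext i j
    by_cases h : i = j <;>
      simp [Matrix.map_apply, Matrix.sub_apply, Matrix.one_apply, h, hc]
  have hMv : ∀ i, ((M.map c).mulVec v) i = (1 - μ) * v i := by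
    intro i
    have h1 := congrFun hEigv i
    rw [hmap, Matrix.sub_mulVec, Matrix.one_mulVec] at h1
    simp only [Pi.sub_apply, Pi.smul_apply, smul_eq_mul] at h1
    linear_combination -h1
  set s : X → ℂ := fun x => ∑ i, (A x i : ℂ) * v i with hs
  set N : ℝ := ∑ i, Complex.normSq (v i) / q i with hN
  set Qr : ℝ := ∑ x, p x / Z x ^ 2 * Complex.normSq (s x) with hQr
  have hNpos : 0 < N := by
    have hvne : ∃ i, v i ≠ 0 := by
      by_contra h
      push_neg at h
      exact hv (funext h)
    obtain ⟨i0, hi0⟩ := hvne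
    refine Finset.sum_pos'
      (fun i _ => div_nonneg (Complex.normSq_nonneg _) (hq i).le)
      ⟨i0, Finset.mem_univ _, div_pos (by simpa [Complex.normSq_pos] using hi0) (hq i0)⟩
  have hconj : ∀ x, (starRingEnd ℂ) (s x) = ∑ i, (A x i : ℂ) * (starRingEnd ℂ) (v i) := by
    intro x
    rw [hs]
    simp [map_sum, Complex.conj_ofReal]
  -- main identity : Qr = (1-μ) N
  have key : (Qr : ℂ) = (1 - μ) * (N : ℂ) := by
    have e1 : ∑ i, (starRingEnd ℂ) (v i) * (q i : ℂ)⁻¹ * ((M.map c).mulVec v) i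
        = (1 - μ) * (N : ℂ) := by
      rw [hN]
      push_cast
      rw [Finset.mul_sum]
      refine Finset.sum_congr rfl fun i _ => ?_
      rw [hMv i, Complex.normSq_eq_conj_mul_self]
      have hqi : (q i : ℂ) ≠ 0 := Complex.ofReal_ne_zero.mpr (hq i).ne'
      field_simp
    have expand : ∀ i, ((M.map c).mulVec v) i
        = (q i : ℂ) * ∑ x, ((p x / Z x ^ 2 : ℝ) : ℂ) * (A x i : ℂ) * s x := by
      intro i
      have lhs_eq : ∑ j, ((M i j : ℝ) : ℂ) * v j
          = ∑ j, ∑ x, (q i : ℂ) * (p x : ℂ) * (A x i : ℂ) * (A x j : ℂ) / (Z x : ℂ) ^ 2 * v j := by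
        refine Finset.sum_congr rfl fun j _ => ?_
        rw [hM i j]
        push_cast
        rw [Finset.mul_sum, Finset.sum_mul]
        exact Finset.sum_congr rfl fun x _ => by ring
      have rhs_eq : (q i : ℂ) * ∑ x, ((p x / Z x ^ 2 : ℝ) : ℂ) * (A x i : ℂ) * s x
          = ∑ x, ∑ j, (q i : ℂ) * (p x : ℂ) * (A x i : ℂ) * (A x j : ℂ) / (Z x : ℂ) ^ 2 * v j := by
        rw [Finset.mul_sum]
        refine Finset.sum_congr rfl fun x _ => ?_
        simp only [hs]
        push_cast
        rw [Finset.mul_sum, Finset.mul_sum]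
        exact Finset.sum_congr rfl fun j _ => by ring
      show ∑ j, ((M i j : ℝ) : ℂ) * v j = _
      rw [lhs_eq, rhs_eq, Finset.sum_comm]
    have e2 : ∑ i, (starRingEnd ℂ) (v i) * (q i : ℂ)⁻¹ * ((M.map c).mulVec v) i
        = (Qr : ℂ) := by
      have percol : ∀ i, (starRingEnd ℂ) (v i) * (q i : ℂ)⁻¹ * ((M.map c).mulVec v) i
          = ∑ x, ((p x / Z x ^ 2 : ℝ) : ℂ) * ((A x i : ℂ) * (starRingEnd ℂ) (v i)) * s x := by
        intro i
        rw [expand i]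
        have hqi : (q i : ℂ) ≠ 0 := Complex.ofReal_ne_zero.mpr (hq i).ne'
        rw [Finset.mul_sum, Finset.mul_sum]
        refine Finset.sum_congr rfl fun x _ => ?_
        have hzx : (Z x : ℂ) ≠ 0 := Complex.ofReal_ne_zero.mpr (hZpos x).ne'
        push_cast
        field_simp
      simp only [percol]
      rw [Finset.sum_comm, hQr]
      push_cast
      refine Finset.sum_congr rfl fun x _ => ?_
      rw [Complex.normSq_eq_conj_mul_self, hconj x, Finset.sum_mul, Finset.mul_sum]
      refine Finset.sum_congr rfl fun i _ => ?_
      ring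
    rw [← e2, e1]
  -- Qr ≥ 0 trivially; Qr > 0 via invertibility; Qr ≤ N via Cauchy-Schwarz
  have hQrpos : 0 < Qr := by
    rcases lt_or_eq_of_le (Finset.sum_nonneg fun x _ =>
      mul_nonneg (div_nonneg (hp x).le (sq_nonneg _)) (Complex.normSq_nonneg _)) with h | h
    · exact h
    -- Qr = 0 : contradiction
    exfalso
    have hterm : ∀ x ∈ Finset.univ, p x / Z x ^ 2 * Complex.normSq (s x) = 0 := by
      exact (Finset.sum_eq_zero_iff_of_nonneg fun x _ =>
        mul_nonneg (div_nonneg (hp x).le (sq_nonneg _)) (Complex.normSq_nonneg _)).1 h.symm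
    have hs0 : ∀ x, s x = 0 := by
      intro x
      have h0 := hterm x (Finset.mem_univ x)
      have hpz : p x / Z x ^ 2 ≠ 0 := (div_pos (hp x) (pow_pos (hZpos x) 2)).ne'
      have := (mul_eq_zero.1 h0).resolve_left hpz
      exact Complex.normSq_eq_zero.1 this
    -- A as matrix is invertible
    set K : Matrix X X ℝ := Matrix.of fun x y : X => Real.exp (-(sD * d x y)) with hK
    set E : Matrix X X ℝ := Matrix.diagonal fun i => Real.exp (-(sP * g i)) with hE
    have hAm : Matrix.of A = K * E := by
      ext x i
      rw [Matrix.mul_apply]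
      simp only [hK, hE, Matrix.diagonal_apply, Matrix.of_apply]
      rw [Finset.sum_eq_single i (fun b _ hb => by simp [hb]) (by simp)]
      simp [hA x i, ← Real.exp_add]
      ring_nf
    have hEunit : IsUnit E := by
      rw [Matrix.isUnit_iff_isUnit_det, hE, Matrix.det_diagonal]
      exact (Finset.prod_pos fun i _ => Real.exp_pos _).ne'.isUnit
    have hAunit : IsUnit (Matrix.of A) := by
      rw [hAm]; exact hker.mul hEunit
    have hAunitC : IsUnit ((Matrix.of A).map c) := by
      have h2 := hAunit.map (RingHom.mapMatrix (Complex.ofRealHom : ℝ →+* ℂ))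
      exact h2
    have hmv0 : ((Matrix.of A).map c).mulVec v = 0 := by
      funext x
      simpa [Matrix.mulVec, dotProduct, Matrix.map_apply, hc, hs] using hs0 x
    have hv0 : v = 0 := by
      have hdet : ((Matrix.of A).map c).det ≠ 0 :=
        (Matrix.isUnit_iff_isUnit_det _ |>.mp hAunitC).ne_zero
      have hinv := Matrix.nonsing_inv_mul ((Matrix.of A).map c) (by
        simpa using (Matrix.isUnit_iff_isUnit_det _ |>.mp hAunitC))
      calc v = (1 : Matrix X X ℂ).mulVec v := by simp
        _ = (((Matrix.of A).map c)⁻¹ * ((Matrix.of A).map c)).mulVec v := by rw [hinv]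
        _ = ((Matrix.of A).map c)⁻¹.mulVec (((Matrix.of A).map c).mulVec v) := by
            rw [Matrix.mulVec_mulVec]
        _ = 0 := by rw [hmv0]; simp
    exact hv hv0
  have hQrleN : Qr ≤ N := by
    have hCS : ∀ x, Complex.normSq (s x) ≤ Z x * ∑ i, A x i * Complex.normSq (v i) / q i := by
      intro x
      have h1 : ‖s x‖ ≤ ∑ i, A x i * ‖v i‖ := by
        calc ‖s x‖ ≤ ∑ i, ‖(A x i : ℂ) * v i‖ :=
              norm_sum_le _ _
          _ = ∑ i, A x i * ‖v i‖ := by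
              refine Finset.sum_congr rfl fun i _ => ?_
              rw [norm_mul, Complex.norm_real, Real.norm_eq_abs, abs_of_pos (hApos x i)]
      have h2 : (∑ i, A x i * ‖v i‖) ^ 2
          ≤ (∑ i, q i * A x i) * ∑ i, A x i * Complex.normSq (v i) / q i := by
        have := Finset.sum_mul_sq_le_sq_mul_sq Finset.univ
          (fun i => Real.sqrt (q i * A x i))
          (fun i => Real.sqrt (A x i / q i) * ‖v i‖)
        calc (∑ i, A x i * ‖v i‖) ^ 2
            = (∑ i, Real.sqrt (q i * A x i) *
                (Real.sqrt (A x i / q i) * ‖v i‖)) ^ 2 := by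
              congr 1
              refine Finset.sum_congr rfl fun i _ => ?_
              rw [← mul_assoc, ← Real.sqrt_mul (mul_nonneg (hq i).le (hApos x i).le)]
              have : q i * A x i * (A x i / q i) = (A x i) ^ 2 := by
                have hqne : q i ≠ 0 := (hq i).ne'
                field_simp
              rw [this, Real.sqrt_sq (hApos x i).le]
          _ ≤ (∑ i, Real.sqrt (q i * A x i) ^ 2) *
                ∑ i, (Real.sqrt (A x i / q i) * ‖v i‖) ^ 2 := this
          _ = (∑ i, q i * A x i) * ∑ i, A x i * Complex.normSq (v i) / q i := by
              congr 1
              · exact Finset.sum_congr rfl fun i _ => Real.sq_sqrt (mul_nonneg (hq i).le (hApos x i).le)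
              · refine Finset.sum_congr rfl fun i _ => ?_
                rw [mul_pow, Real.sq_sqrt (div_nonneg (hApos x i).le (hq i).le), Complex.sq_norm]
                field_simp
      calc Complex.normSq (s x) = ‖s x‖ ^ 2 := (Complex.sq_norm _).symm
        _ ≤ (∑ i, A x i * ‖v i‖) ^ 2 := by
            apply pow_le_pow_left₀ (norm_nonneg _) h1
        _ ≤ (∑ i, q i * A x i) * ∑ i, A x i * Complex.normSq (v i) / q i := h2
        _ = Z x * ∑ i, A x i * Complex.normSq (v i) / q i := by rw [hZ]
    calc Qr ≤ ∑ x, p x / Z x ^ 2 * (Z x * ∑ i, A x i * Complex.normSq (v i) / q i) := by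
          rw [hQr]
          exact Finset.sum_le_sum fun x _ => mul_le_mul_of_nonneg_left (hCS x)
            (div_nonneg (hp x).le (sq_nonneg _))
      _ = ∑ x, ∑ i, (p x * A x i / Z x) * (Complex.normSq (v i) / q i) := by
          refine Finset.sum_congr rfl fun x _ => ?_
          rw [Finset.mul_sum, Finset.mul_sum]
          refine Finset.sum_congr rfl fun i _ => ?_
          have hzz : Z x ≠ 0 := (hZpos x).ne'
          have hqq : q i ≠ 0 := (hq i).ne'
          field_simp
      _ = ∑ i, (∑ x, p x * A x i / Z x) * (Complex.normSq (v i) / q i) := by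
          rw [Finset.sum_comm]
          exact Finset.sum_congr rfl fun i _ => (Finset.sum_mul _ _ _).symm
      _ = N := by
          rw [hN]
          exact Finset.sum_congr rfl fun i _ => by rw [hfix i, one_mul]
  -- conclude
  have hNne : (N : ℂ) ≠ 0 := Complex.ofReal_ne_zero.mpr hNpos.ne'
  have hlam : (1 : ℂ) - μ = ((Qr / N : ℝ) : ℂ) := by
    push_cast
    rw [eq_div_iff hNne]
    linear_combination -key
  have him : μ.im = 0 := by
    have h := congrArg Complex.im hlam
    simp [Complex.sub_im, Complex.one_im, Complex.ofReal_im] at h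
    exact h
  have hre : μ.re = 1 - Qr / N := by
    have h := congrArg Complex.re hlam
    simp [Complex.sub_re, Complex.one_re, Complex.ofReal_re] at h
    linarith
  refine ⟨him, ?_, ?_⟩
  · rw [hre]
    have := (div_le_one hNpos).mpr hQrleN
    linarith
  · rw [hre]
    have := div_pos hQrpos hNpos
    linarith


end RDP
end
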